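/- arXiv:2312.01116 — 4 statements merged into one kernel-verified Lean document; each statement's English description precedes it below -/
import Mathlib

section
/- Let k ≥ 2 be an integer, A a nontrivial closed class of decision tables from M_k^∞, ψ a bounded complexity measure, and suppose the function L_{ψ,A} is everywhere defined. Then the function H^∞_{ψ,A} is everywhere defined and, for any n ∈ ℕ such that L_{ψ,A}(n) > 0, H^∞_{ψ,A}(n) ≥ log_k L_{ψ,A}(n). -/
open Classical

noncomputable section

/-- A decision table with many-valued decisions over `E_k = {0,…,k-1}`.
Columns are labeled with attributes `f_i` identified with their indices `i : ℕ`;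
a row is a function `ℕ → ℕ` supported on the attribute set, with values `< k`;
each row is labeled with a nonempty finite set of decisions. -/
structure Table (k : ℕ) where
  attrs : Finset ℕ
  rows : Finset (ℕ → ℕ)
  dec : (ℕ → ℕ) → Finset ℕ
  rows_mem : ∀ r ∈ rows, (∀ i ∈ attrs, r i < k) ∧ (∀ i ∉ attrs, r i = 0)
  dec_nonempty : ∀ r ∈ rows, (dec r).Nonempty

namespace Table

variable {k : ℕ}

/-- a row satisfies a word (a list of (attribute, value) pairs) -/
def rowSat (r : ℕ → ℕ) (α : List (ℕ × ℕ)) : Prop := ∀ q ∈ α, r q.1 = q.2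

/-- the word belongs to `Ω_k(T)` -/
def wordOk (T : Table k) (α : List (ℕ × ℕ)) : Prop := ∀ q ∈ α, q.1 ∈ T.attrs ∧ q.2 < k

/-- the subtable `Tα` -/
def applyWord (T : Table k) (α : List (ℕ × ℕ)) : Table k where
  attrs := T.attrs
  rows := T.rows.filter (fun r => rowSat r α)
  dec := T.dec
  rows_mem := fun r hr => T.rows_mem r (Finset.mem_filter.mp hr).1
  dec_nonempty := fun r hr => T.dec_nonempty r (Finset.mem_filter.mp hr).1

/-- `T ∈ M_k^{∞c}` : the table has a common decision -/
def hasCommon (T : Table k) : Prop := ∃ d : ℕ, ∀ r ∈ T.rows, d ∈ T.dec r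

/-- `N(T)` : number of rows -/
def NT (T : Table k) : ℕ := T.rows.card

/-- `W(T)` : number of columns (`0` for the empty table `Λ`) -/
def WT (T : Table k) : ℕ := if T.rows = ∅ then 0 else T.attrs.card

/-- the closure `[T]` of `T` under removal of columns and changing of decisions:
`Q = J(ν, I(D,T))` for some `D ⊆ At(T)` and some `ν` (the decision labeling of `Q`
on its rows is arbitrary, i.e. is the arbitrary `ν` with nonempty finite values). -/
def closureT (T : Table k) : Set (Table k) :=
  {Q | ∃ D : Finset ℕ, D ⊆ T.attrs ∧ Q.attrs = T.attrs \ D ∧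
      Q.rows = T.rows.image (fun r i => if i ∈ T.attrs \ D then r i else 0)}

end Table

/-- a closed class: `[A] = A` -/
def IsClosedClass {k : ℕ} (A : Set (Table k)) : Prop := ∀ T ∈ A, Table.closureT T ⊆ A

/-- a nontrivial class: contains nonempty tables -/
def NontrivialClass {k : ℕ} (A : Set (Table k)) : Prop := ∃ T ∈ A, T.rows.Nonempty

/-- the part of a `k`-decision tree below one edge leaving the root -/
inductive DTree (k : ℕ) : Type
  | leaf (d : ℕ) : DTree k
  | node (a : ℕ) (n : ℕ) (lab : Fin (n + 1) → ℕ) (ch : Fin (n + 1) → DTree k) : DTree k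

namespace DTree

variable {k : ℕ}

/-- the set of pairs (π(τ), terminal decision) over complete paths τ -/
def paths : DTree k → Set (List (ℕ × ℕ) × ℕ)
  | leaf d => {([], d)}
  | node a _ lab ch =>
      ⋃ i, (fun p : List (ℕ × ℕ) × ℕ => ((a, lab i) :: p.1, p.2)) '' paths (ch i)

/-- edge labels belong to `E_k` -/
def wf : DTree k → Prop
  | leaf _ => True
  | node _ _ lab ch => (∀ i, lab i < k) ∧ ∀ i, wf (ch i)

/-- edges leaving any node are labeled with pairwise different numbers -/
def det : DTree k → Prop
  | leaf _ => True
  | node _ _ lab ch => Function.Injective lab ∧ ∀ i, det (ch i)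

/-- the set of attributes attached to nodes -/
def attrs : DTree k → Finset ℕ
  | leaf _ => ∅
  | node a _ _ ch => insert a (Finset.univ.biUnion fun i => attrs (ch i))

end DTree

/-- a `k`-decision tree: an unlabeled root with `n+1` unlabeled edges leaving it -/
structure KTree (k : ℕ) where
  n : ℕ
  sub : Fin (n + 1) → DTree k

namespace KTree

variable {k : ℕ}

def paths (Γ : KTree k) : Set (List (ℕ × ℕ) × ℕ) := ⋃ i, (Γ.sub i).paths

def wf (Γ : KTree k) : Prop := ∀ i, (Γ.sub i).wf

def attrs (Γ : KTree k) : Finset ℕ := Finset.univ.biUnion fun i => (Γ.sub i).attrs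

end KTree

/-- partially bounded complexity measure on words over `P` -/
structure PBCM where
  toFun : List ℕ → ℕ
  pos : ∀ α, toFun α = 0 ↔ α = []
  perm : ∀ α β, List.Perm α β → toFun α = toFun β
  mono : ∀ α β, toFun α ≤ toFun (α ++ β)
  subadd : ∀ α β, toFun (α ++ β) ≤ toFun α + toFun β

/-- bounded complexity measure -/
structure BCM extends PBCM where
  bdd : ∀ α, α.length ≤ toFun α

/-- extension of ψ to words over pairs `(f_i, δ)` -/
def PBCM.onWord (ψ : PBCM) (α : List (ℕ × ℕ)) : ℕ := ψ.toFun (α.map Prod.fst)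

/-- extension of ψ to finite sets of attributes -/
def PBCM.onSet (ψ : PBCM) (s : Finset ℕ) : ℕ := ψ.toFun (s.sort (· ≤ ·))

/-- the depth `h` -/
def depthCM : BCM where
  toFun := List.length
  pos := fun α => List.length_eq_zero_iff
  perm := fun _ _ h => h.length_eq
  mono := fun α β => by simp
  subadd := fun α β => by simp
  bdd := fun _ => le_rfl

/-- `ψ(Γ)` : complexity of a decision tree -/
def treeComp {k : ℕ} (ψ : PBCM) (Γ : KTree k) : ℕ :=
  sSup {c | ∃ p ∈ Γ.paths, ψ.onWord p.1 = c}

/-- `Γ` is a nondeterministic decision tree for the (nonempty) table `T` -/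
def isNDT {k : ℕ} (T : Table k) (Γ : KTree k) : Prop :=
  T.rows.Nonempty ∧ Γ.wf ∧ Γ.attrs ⊆ T.attrs ∧
  (∀ r ∈ T.rows, ∃ p ∈ Γ.paths, Table.rowSat r p.1) ∧
  (∀ p ∈ Γ.paths, (T.applyWord p.1).rows = ∅ ∨ ∀ r ∈ (T.applyWord p.1).rows, p.2 ∈ T.dec r)

/-- `Γ` is a deterministic decision tree for `T` -/
def isDDT {k : ℕ} (T : Table k) (Γ : KTree k) : Prop :=
  isNDT T Γ ∧ Γ.n = 0 ∧ ∀ i, (Γ.sub i).det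

/-- `ψ^a(T)` -/
def psiA {k : ℕ} (ψ : PBCM) (T : Table k) : ℕ :=
  sInf {c | ∃ Γ : KTree k, isNDT T Γ ∧ treeComp ψ Γ = c}

/-- `ψ^d(T)` -/
def psiD {k : ℕ} (ψ : PBCM) (T : Table k) : ℕ :=
  sInf {c | ∃ Γ : KTree k, isDDT T Γ ∧ treeComp ψ Γ = c}

/-- `m_ψ(T)` -/
def mpsi {k : ℕ} (ψ : PBCM) (T : Table k) : ℕ :=
  if T.rows = ∅ then 0 else T.attrs.sup fun i => ψ.toFun [i]

/-- `W_ψ(T)` -/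
def Wpsi {k : ℕ} (ψ : PBCM) (T : Table k) : ℕ :=
  if T.rows = ∅ then 0 else ψ.onSet T.attrs

/-- a tuple `δ̄ ∈ E_k^{|At(T)|}` -/
def validTuple {k : ℕ} (T : Table k) (δ : ℕ → ℕ) : Prop :=
  (∀ i ∈ T.attrs, δ i < k) ∧ ∀ i ∉ T.attrs, δ i = 0

/-- `M_ψ(T, δ̄)` -/
def MpsiAt {k : ℕ} (ψ : PBCM) (T : Table k) (δ : ℕ → ℕ) : ℕ :=
  sInf {p | ∃ s : Finset ℕ, s ⊆ T.attrs ∧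
    (T.applyWord ((s.sort (· ≤ ·)).map fun i => (i, δ i))).hasCommon ∧ ψ.onSet s = p}

/-- `M_ψ(T)` -/
def Mpsi {k : ℕ} (ψ : PBCM) (T : Table k) : ℕ :=
  if T.hasCommon then 0 else sSup {p | ∃ δ, validTuple T δ ∧ MpsiAt ψ T δ = p}

/-- `U` is a `(ψ,n)`-cover of `T` -/
def isCover {k : ℕ} (ψ : PBCM) (n : ℕ) (T : Table k) (U : Finset (List (ℕ × ℕ))) : Prop :=
  (∀ α ∈ U, T.wordOk α ∧ ψ.onWord α ≤ n) ∧ ∀ r ∈ T.rows, ∃ α ∈ U, Table.rowSat r α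

/-- `U` is an irreducible `(ψ,n)`-cover of `T` -/
def isIrredCover {k : ℕ} (ψ : PBCM) (n : ℕ) (T : Table k) (U : Finset (List (ℕ × ℕ))) : Prop :=
  isCover ψ n T U ∧ ∀ V ⊂ U, ¬ isCover ψ n T V

/-- `l_ψ(T,n)` : maximum cardinality of an irreducible `(ψ,n)`-cover -/
def lpsi {k : ℕ} (ψ : PBCM) (T : Table k) (n : ℕ) : ℕ :=
  sSup {c | ∃ U, isIrredCover ψ n T U ∧ U.card = c}

/-- the set `{ψ^d(T) : T ∈ A, ψ^a(T) ≤ n}`; `H^∞_{ψ,A}(n)` is defined iff this set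
is finite, and is then its maximum -/
def HSet {k : ℕ} (ψ : PBCM) (A : Set (Table k)) (n : ℕ) : Set ℕ :=
  {c | ∃ T ∈ A, psiA ψ T ≤ n ∧ psiD ψ T = c}

/-- `H^∞_{ψ,A}(n)` (as the max = sSup of the finite set `HSet ψ A n`) -/
def Hfun {k : ℕ} (ψ : PBCM) (A : Set (Table k)) (n : ℕ) : ℕ := sSup (HSet ψ A n)

/-- the set `{l_ψ(T,n) : T ∈ A}` -/
def LSet {k : ℕ} (ψ : PBCM) (A : Set (Table k)) (n : ℕ) : Set ℕ :=
  {c | ∃ T ∈ A, lpsi ψ T n = c}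

/-- `L_{ψ,A}(n)` -/
def Lfun {k : ℕ} (ψ : PBCM) (A : Set (Table k)) (n : ℕ) : ℕ := sSup (LSet ψ A n)

/-- `H_D` for an infinite `D ⊆ ℕ` : `H_D(n)` is the largest element of `D` that is `≤ n`
(and `0` if there is none) -/
def HDfun (D : Set ℕ) (n : ℕ) : ℕ := sSup {d | d ∈ D ∧ d ≤ n}

/-- a complete table from `M_2^∞` -/
def isComplete (Q : Table 2) : Prop := Q.NT = 2 ^ Q.attrs.card

/-- `Z(T)` : maximum number of columns in a complete table from `[T]` (`0` if none) -/
def Zt (T : Table 2) : ℕ := sSup {c | ∃ Q ∈ Table.closureT T, isComplete Q ∧ Q.WT = c}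

/-- the set `{Z(T) : T ∈ A_ψ(n)}` -/
def ZSet (ψ : PBCM) (A : Set (Table 2)) (n : ℕ) : Set ℕ :=
  {c | ∃ T ∈ A, mpsi ψ T ≤ n ∧ Zt T = c}

/-- `Z_{ψ,A}(n)` -/
def Zfun (ψ : PBCM) (A : Set (Table 2)) (n : ℕ) : ℕ := sSup (ZSet ψ A n)

/-- annihilating word for `T` -/
def isAnnih (T : Table 2) (α : List (ℕ × ℕ)) : Prop :=
  T.wordOk α ∧ (∀ p ∈ α, ∀ q ∈ α, p.1 = q.1 → p.2 = q.2) ∧ (T.applyWord α).rows = ∅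

/-- irreducible annihilating word for `T` -/
def isIrredAnnih (T : Table 2) (α : List (ℕ × ℕ)) : Prop :=
  isAnnih T α ∧ ∀ β, β.Sublist α → β ≠ α → ¬ isAnnih T β

/-- `G(T)` : maximum length of an irreducible annihilating word (`0` if none) -/
def Gt (T : Table 2) : ℕ := sSup {c | ∃ α, isIrredAnnih T α ∧ α.length = c}

/-- the set `{G(T) : T ∈ A_ψ(n)}` -/
def GSet (ψ : PBCM) (A : Set (Table 2)) (n : ℕ) : Set ℕ :=
  {c | ∃ T ∈ A, mpsi ψ T ≤ n ∧ Gt T = c}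

/-- `G_{ψ,A}(n)` -/
def Gfun (ψ : PBCM) (A : Set (Table 2)) (n : ℕ) : ℕ := sSup (GSet ψ A n)

/-! ### The tables `T_k` and `T_k^*` built from the triangle-shaped graph `G_k` -/

/-- `m(k) = k(k+1)/2` : number of nodes of `G_k` -/
def mnum (k : ℕ) : ℕ := k * (k + 1) / 2

/-- the layer of node `i` of `G_k` : the unique `L` with `m(L-1) < i ≤ m(L)` -/
def layer (i : ℕ) : ℕ := sInf {L | i ≤ mnum L}

/-- left child `l(i) = i + layer i`; right child `p(i) = i + layer i + 1` -/
def lchild (i : ℕ) : ℕ := i + layer i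

def rchild (i : ℕ) : ℕ := i + layer i + 1

/-- the map `ν_k : E_2^{m(k)} → P(ω)` -/
def nuk (k : ℕ) (δ : ℕ → ℕ) : Finset ℕ :=
  (Finset.range (mnum k + 1)).filter fun i =>
    if i = 0 then δ 1 = 0
    else if layer i = k then δ i = 1
    else δ i = 1 ∧ δ (lchild i) = 0 ∧ δ (rchild i) = 0

/-- all tuples over `E_k` supported on the attribute set `s` -/
def allRows (k : ℕ) (s : Finset ℕ) : Finset (ℕ → ℕ) :=
  (s.pi fun _ => Finset.range k).image fun f i => if h : i ∈ s then f i h else 0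

/-- the table with attribute set `s`, all possible rows, and decision labeling `d` -/
def fullTable (k : ℕ) (s : Finset ℕ) (d : (ℕ → ℕ) → Finset ℕ) : Table k where
  attrs := s
  rows := allRows k s
  dec := fun r => if (d r).Nonempty then d r else {0}
  rows_mem := by
    intro r hr
    simp only [allRows, Finset.mem_image] at hr
    obtain ⟨f, hf, rfl⟩ := hr
    refine ⟨fun i hi => ?_, fun i hi => ?_⟩
    · have h := (Finset.mem_pi.mp hf) i hi
      simp only [Finset.mem_range] at h
      simpa [hi] using h
    · simp [hi]
  dec_nonempty := by
    intro r _
    by_cases h : (d r).Nonempty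
    · simp [h]
    · simp [h]

/-- the complete table `T_k` with `m(k)` columns `f_1, …, f_{m(k)}` and `2^{m(k)}` rows,
each row `δ̄` labeled with `ν_k(δ̄)` (which is always nonempty) -/
def Tk (k : ℕ) : Table 2 := fullTable 2 (Finset.Icc 1 (mnum k)) (nuk k)

/-- the `j`-th node of the complete path of `G_k` determined by the choices `c` -/
def pathNode (c : ℕ → Bool) : ℕ → ℕ
  | 0 => 1
  | j + 1 => if c j then lchild (pathNode c j) else rchild (pathNode c j)

/-- `T_k^*` : the subtable of `T_k` whose rows are exactly the characteristic tuples
of complete paths of `G_k` -/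
def Tstar (k : ℕ) : Table 2 where
  attrs := (Tk k).attrs
  rows := (Tk k).rows.filter fun r =>
    ∃ c : ℕ → Bool, ∀ i ∈ Finset.Icc 1 (mnum k), (r i = 1 ↔ ∃ j < k, pathNode c j = i)
  dec := (Tk k).dec
  rows_mem := fun r hr => (Tk k).rows_mem r (Finset.mem_filter.mp hr).1
  dec_nonempty := fun r hr => (Tk k).dec_nonempty r (Finset.mem_filter.mp hr).1

/-- `r(T)` for a subtable `T` of `T_k^*` : the number of distinct decision sets
`ν_k(δ̄)` among the rows `δ̄` of `T` -/
def rnum (k : ℕ) (T : Table 2) : ℕ := (T.rows.image (nuk k)).card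

end

section AuxTrees

variable {k : ℕ}

lemma ncard_iUnion_le' {ι : Type} [Fintype ι] (s : ι → Set (List (ℕ × ℕ) × ℕ))
    (h : ∀ i, (s i).Finite) : (⋃ i, s i).ncard ≤ ∑ i, (s i).ncard := by
  classical
  have hU : (⋃ i, s i).Finite := Set.finite_iUnion h
  rw [Set.ncard_eq_toFinset_card _ hU]
  have hsub : hU.toFinset ⊆ Finset.univ.biUnion (fun i => (h i).toFinset) := by
    intro x hx
    simp only [Set.Finite.mem_toFinset, Set.mem_iUnion] at hx
    obtain ⟨i, hi⟩ := hx
    exact Finset.mem_biUnion.mpr ⟨i, Finset.mem_univ i, (h i).mem_toFinset.mpr hi⟩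
  calc hU.toFinset.card ≤ _ := Finset.card_le_card hsub
    _ ≤ ∑ i, ((h i).toFinset).card := Finset.card_biUnion_le
    _ = ∑ i, (s i).ncard := by
        refine Finset.sum_congr rfl fun i _ => ?_
        rw [Set.ncard_eq_toFinset_card _ (h i)]

namespace DTree

lemma paths_nonempty (t : DTree k) : t.paths.Nonempty := by
  induction t with
  | leaf d => exact ⟨([], d), rfl⟩
  | node a n lab ch ih =>
    obtain ⟨p, hp⟩ := ih 0
    exact ⟨((a, lab 0) :: p.1, p.2), Set.mem_iUnion.mpr ⟨0, ⟨p, hp, rfl⟩⟩⟩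

lemma paths_finite (t : DTree k) : t.paths.Finite := by
  induction t with
  | leaf d => exact Set.finite_singleton _
  | node a n lab ch ih => exact Set.finite_iUnion (fun i => (ih i).image _)

lemma paths_spec : ∀ (t : DTree k), t.wf → ∀ p ∈ t.paths, ∀ q ∈ p.1, q.1 ∈ t.attrs ∧ q.2 < k := by
  intro t
  induction t with
  | leaf d =>
    intro _ p hp q hq
    have : p = ([], d) := hp
    rw [this] at hq
    exact absurd hq List.not_mem_nil
  | node a n lab ch ih =>
    intro hwf p hp q hq
    obtain ⟨i, p', hp', rfl⟩ : ∃ i, ∃ p' ∈ (ch i).paths, ((a, lab i) :: p'.1, p'.2) = p := by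
      obtain ⟨i, hpi⟩ := Set.mem_iUnion.mp hp
      obtain ⟨p', hp', he⟩ := hpi
      exact ⟨i, p', hp', he⟩
    rcases List.mem_cons.mp hq with rfl | hq'
    · exact ⟨Finset.mem_insert_self _ _, hwf.1 i⟩
    · obtain ⟨h1, h2⟩ := ih i (hwf.2 i) p' hp' q hq'
      exact ⟨Finset.mem_insert_of_mem (Finset.mem_biUnion.mpr ⟨i, Finset.mem_univ i, h1⟩), h2⟩

lemma paths_card_le (hk : 1 ≤ k) :
    ∀ (t : DTree k), t.wf → t.det → ∀ d : ℕ,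
      (∀ p ∈ t.paths, p.1.length ≤ d) → t.paths.ncard ≤ k ^ d := by
  intro t
  induction t with
  | leaf d0 =>
    intro _ _ d _
    have : (DTree.leaf d0 : DTree k).paths = {([], d0)} := rfl
    rw [this, Set.ncard_singleton]
    exact Nat.one_le_pow _ _ hk
  | node a n lab ch ih =>
    intro hwf hdet d hd
    obtain ⟨p0, hp0⟩ := paths_nonempty (ch 0)
    have hmem0 : ((a, lab 0) :: p0.1, p0.2) ∈ (DTree.node a n lab ch).paths :=
      Set.mem_iUnion.mpr ⟨0, ⟨p0, hp0, rfl⟩⟩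
    have h1 : 1 ≤ d := by
      have := hd _ hmem0
      simp only [List.length_cons] at this
      omega
    have hchild : ∀ i, ∀ p ∈ (ch i).paths, p.1.length ≤ d - 1 := by
      intro i p hp
      have := hd _ (Set.mem_iUnion.mpr ⟨i, ⟨p, hp, rfl⟩⟩)
      simp only [List.length_cons] at this
      omega
    have hnk : n + 1 ≤ k := by
      have hinj : Function.Injective (fun i : Fin (n+1) => (⟨lab i, hwf.1 i⟩ : Fin k)) := by
        intro i j h
        exact hdet.1 (by simpa using congrArg Fin.val h)
      simpa using Fintype.card_le_of_injective _ hinj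
    calc ((DTree.node a n lab ch).paths).ncard
        ≤ ∑ i : Fin (n+1), ((fun p : List (ℕ × ℕ) × ℕ => ((a, lab i) :: p.1, p.2)) '' (ch i).paths).ncard :=
          ncard_iUnion_le' _ (fun i => (paths_finite _).image _)
      _ ≤ ∑ _i : Fin (n+1), k ^ (d - 1) := by
          refine Finset.sum_le_sum fun i _ => ?_
          exact le_trans (Set.ncard_image_le (paths_finite _)) (ih i (hwf.2 i) (hdet.2 i) (d-1) (hchild i))
      _ = (n + 1) * k ^ (d - 1) := by simp [Finset.sum_const, mul_comm]
      _ ≤ k * k ^ (d - 1) := Nat.mul_le_mul_right _ hnk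
      _ = k ^ d := by
          rw [← pow_succ']
          congr 1
          omega

end DTree

namespace KTree

lemma paths_finite (Γ : KTree k) : Γ.paths.Finite :=
  Set.finite_iUnion fun i => (Γ.sub i).paths_finite

lemma paths_spec {Γ : KTree k} (hwf : Γ.wf) {p} (hp : p ∈ Γ.paths) :
    ∀ q ∈ p.1, q.1 ∈ Γ.attrs ∧ q.2 < k := by
  obtain ⟨i, hpi⟩ := Set.mem_iUnion.mp hp
  intro q hq
  obtain ⟨h1, h2⟩ := DTree.paths_spec (Γ.sub i) (hwf i) p hpi q hq
  exact ⟨Finset.mem_biUnion.mpr ⟨i, Finset.mem_univ _, h1⟩, h2⟩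

end KTree

lemma onWord_le_treeComp (ψ : PBCM) {Γ : KTree k} {p} (hp : p ∈ Γ.paths) :
    ψ.onWord p.1 ≤ treeComp ψ Γ := by
  have he : {c | ∃ p ∈ Γ.paths, ψ.onWord p.1 = c} = (fun p => ψ.onWord p.1) '' Γ.paths := by
    ext c
    simp only [Set.mem_setOf_eq, Set.mem_image]
  apply le_csSup
  · rw [he]
    exact Set.Finite.bddAbove (Set.Finite.image _ (KTree.paths_finite Γ))
  · exact ⟨p, hp, rfl⟩

lemma treeComp_le (ψ : PBCM) {Γ : KTree k} {n : ℕ}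
    (h : ∀ p ∈ Γ.paths, ψ.onWord p.1 ≤ n) : treeComp ψ Γ ≤ n := by
  apply csSup_le'
  rintro c ⟨p, hp, rfl⟩
  exact h p hp

end AuxTrees
section AuxConstr

variable {k : ℕ}

/-- a chain decision tree following the word `α`, ending with decision `d` -/
def chain (k : ℕ) : List (ℕ × ℕ) → ℕ → DTree k
  | [], d => .leaf d
  | q :: t, d => .node q.1 0 (fun _ => q.2) (fun _ => chain k t d)

lemma chain_paths (α : List (ℕ × ℕ)) (d : ℕ) : (chain k α d).paths = {(α, d)} := by
  induction α with
  | nil => rfl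
  | cons q t ih =>
    show (⋃ _i : Fin 1, (fun p : List (ℕ × ℕ) × ℕ => ((q.1, q.2) :: p.1, p.2)) '' (chain k t d).paths) = _
    rw [ih, Set.iUnion_const, Set.image_singleton]

lemma chain_wf (α : List (ℕ × ℕ)) (d : ℕ) (h : ∀ q ∈ α, q.2 < k) : (chain k α d).wf := by
  induction α with
  | nil => trivial
  | cons q t ih =>
    exact ⟨fun _ => h q (List.mem_cons_self),
      fun _ => ih (fun q' hq' => h q' (List.mem_cons_of_mem _ hq'))⟩

lemma chain_attrs (α : List (ℕ × ℕ)) (d : ℕ) (s : Finset ℕ) (h : ∀ q ∈ α, q.1 ∈ s) :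
    (chain k α d).attrs ⊆ s := by
  induction α with
  | nil => intro x hx; exact absurd hx (Finset.notMem_empty x)
  | cons q t ih =>
    intro x hx
    rcases Finset.mem_insert.mp hx with rfl | hx'
    · exact h q (List.mem_cons_self)
    · obtain ⟨i, _, hi⟩ := Finset.mem_biUnion.mp hx'
      exact ih (fun q' hq' => h q' (List.mem_cons_of_mem _ hq')) hi

/-- the full deterministic tree querying the attributes in `s` in order, with leaf
decisions given by `g` applied to the word along the path -/
def fullDT (k : ℕ) : List ℕ → (List (ℕ × ℕ) → ℕ) → DTree k
  | [], g => .leaf (g [])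
  | a :: t, g => .node a (k - 1) (fun i => (i : ℕ))
      (fun i => fullDT k t (fun w => g ((a, (i : ℕ)) :: w)))

lemma fullDT_paths_sub (hk : 1 ≤ k) :
    ∀ (s : List ℕ) (g : List (ℕ × ℕ) → ℕ), ∀ p ∈ (fullDT k s g).paths,
      p.1.map Prod.fst = s ∧ p.2 = g p.1 := by
  intro s
  induction s with
  | nil =>
    intro g p hp
    have : p = ([], g []) := hp
    rw [this]
    exact ⟨rfl, rfl⟩
  | cons a t ih =>
    intro g p hp
    obtain ⟨i, hpi⟩ := Set.mem_iUnion.mp hp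
    obtain ⟨p', hp', rfl⟩ := hpi
    obtain ⟨h1, h2⟩ := ih _ p' hp'
    refine ⟨?_, ?_⟩
    · simp only [List.map_cons, h1]
    · simpa using h2

lemma fullDT_paths_mem (hk : 1 ≤ k) (r : ℕ → ℕ) :
    ∀ (s : List ℕ) (g : List (ℕ × ℕ) → ℕ), (∀ a ∈ s, r a < k) →
      (s.map (fun a => (a, r a)), g (s.map fun a => (a, r a))) ∈ (fullDT k s g).paths := by
  intro s
  induction s with
  | nil => intro g _; exact rfl
  | cons a t ih =>
    intro g hr
    have hra : r a < k - 1 + 1 := by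
      have := hr a (List.mem_cons_self)
      omega
    refine Set.mem_iUnion.mpr ⟨⟨r a, hra⟩, ?_⟩
    refine ⟨(t.map (fun a => (a, r a)), _), ih _ (fun a' ha' => hr a' (List.mem_cons_of_mem _ ha')), rfl⟩

lemma fullDT_wf (hk : 1 ≤ k) : ∀ (s : List ℕ) (g : List (ℕ × ℕ) → ℕ), (fullDT k s g).wf := by
  intro s
  induction s with
  | nil => intro g; trivial
  | cons a t ih =>
    intro g
    refine ⟨fun i => ?_, fun i => ih _⟩
    show (i : ℕ) < k
    have := i.isLt
    omega

lemma fullDT_det : ∀ (s : List ℕ) (g : List (ℕ × ℕ) → ℕ), (fullDT k s g).det := by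
  intro s
  induction s with
  | nil => intro g; trivial
  | cons a t ih =>
    intro g
    exact ⟨fun i j h => Fin.ext h, fun i => ih _⟩

lemma fullDT_attrs : ∀ (s : List ℕ) (g : List (ℕ × ℕ) → ℕ), (fullDT k s g).attrs ⊆ s.toFinset := by
  intro s
  induction s with
  | nil => intro g x hx; exact absurd hx (Finset.notMem_empty x)
  | cons a t ih =>
    intro g x hx
    rcases Finset.mem_insert.mp hx with rfl | hx'
    · simp
    · obtain ⟨i, _, hi⟩ := Finset.mem_biUnion.mp hx'
      have := ih _ hi
      simp only [List.toFinset_cons]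
      exact Finset.mem_insert_of_mem this

/-- the finite set of lists of length ≤ m over alphabet F -/
def listsLe (F : Finset (ℕ × ℕ)) : ℕ → Finset (List (ℕ × ℕ))
  | 0 => {[]}
  | m + 1 => listsLe F m ∪ (F ×ˢ listsLe F m).image fun p => p.1 :: p.2

lemma mem_listsLe {F : Finset (ℕ × ℕ)} :
    ∀ {m : ℕ} {l : List (ℕ × ℕ)}, l.length ≤ m → (∀ q ∈ l, q ∈ F) → l ∈ listsLe F m := by
  intro m
  induction m with
  | zero =>
    intro l h _
    rw [List.length_eq_zero_iff.mp (Nat.le_zero.mp h)]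
    exact Finset.mem_singleton_self _
  | succ m ih =>
    intro l hlen hF
    match l with
    | [] =>
      exact Finset.mem_union_left _ (ih (Nat.zero_le m) (fun q hq => absurd hq List.not_mem_nil))
    | q :: t =>
      refine Finset.mem_union_right _ (Finset.mem_image.mpr ⟨(q, t), ?_, rfl⟩)
      refine Finset.mem_product.mpr ⟨hF q (List.mem_cons_self), ?_⟩
      exact ih (by simpa using hlen) (fun q' hq' => hF q' (List.mem_cons_of_mem _ hq'))

lemma psi_flatten_le (ψ : PBCM) :
    ∀ (l : List (List ℕ)) (n : ℕ), (∀ x ∈ l, ψ.toFun x ≤ n) → ψ.toFun l.flatten ≤ n * l.length := by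
  intro l
  induction l with
  | nil =>
    intro n _
    simp [(ψ.pos []).mpr rfl]
  | cons x t ih =>
    intro n h
    calc ψ.toFun (x :: t).flatten = ψ.toFun (x ++ t.flatten) := by rw [List.flatten_cons]
      _ ≤ ψ.toFun x + ψ.toFun t.flatten := ψ.subadd _ _
      _ ≤ n + n * t.length :=
          Nat.add_le_add (h x (List.mem_cons_self)) (ih n fun y hy => h y (List.mem_cons_of_mem _ hy))
      _ = n * (x :: t).length := by simp [List.length_cons, Nat.mul_add, Nat.add_comm]

end AuxConstr
section AuxCovers

variable {k : ℕ}

lemma exists_irred_subcover {ψ : PBCM} {n : ℕ} {T : Table k} {U : Finset (List (ℕ × ℕ))}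
    (h : isCover ψ n T U) : ∃ V ⊆ U, isIrredCover ψ n T V := by
  classical
  revert h
  induction U using Finset.strongInduction with
  | _ U ih =>
    intro h
    by_cases hir : ∀ V ⊂ U, ¬ isCover ψ n T V
    · exact ⟨U, Finset.Subset.refl U, h, hir⟩
    · push_neg at hir
      obtain ⟨V, hVU, hV⟩ := hir
      obtain ⟨W, hWV, hW⟩ := ih V hVU hV
      exact ⟨W, hWV.trans hVU.subset, hW⟩

lemma private_row {ψ : PBCM} {n : ℕ} {T : Table k} {U : Finset (List (ℕ × ℕ))}
    (h : isIrredCover ψ n T U) :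
    ∀ α ∈ U, ∃ r ∈ T.rows, Table.rowSat r α ∧ ∀ β ∈ U, Table.rowSat r β → β = α := by
  classical
  intro α hα
  by_contra hcon
  push_neg at hcon
  apply h.2 (U.erase α) (Finset.erase_ssubset hα)
  constructor
  · intro β hβ
    exact h.1.1 β (Finset.mem_of_mem_erase hβ)
  · intro r hr
    obtain ⟨β, hβU, hβsat⟩ := h.1.2 r hr
    by_cases hβα : β = α
    · subst hβα
      obtain ⟨γ, hγU, hγsat, hγne⟩ := hcon r hr hβsat
      exact ⟨γ, Finset.mem_erase.mpr ⟨hγne, hγU⟩, hγsat⟩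
    · exact ⟨β, Finset.mem_erase.mpr ⟨hβα, hβU⟩, hβsat⟩

lemma irredCover_card_le {ψ : BCM} {n : ℕ} {T : Table k} {U : Finset (List (ℕ × ℕ))}
    (h : isIrredCover ψ.toPBCM n T U) :
    U.card ≤ (listsLe (T.attrs ×ˢ Finset.range k) n).card := by
  apply Finset.card_le_card
  intro α hα
  obtain ⟨hok, hψ⟩ := h.1.1 α hα
  apply mem_listsLe
  · have h1 := ψ.bdd (α.map Prod.fst)
    rw [List.length_map] at h1
    exact h1.trans hψ
  · intro q hq
    exact Finset.mem_product.mpr ⟨(hok q hq).1, Finset.mem_range.mpr (hok q hq).2⟩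

lemma bddAbove_irred (ψ : BCM) (n : ℕ) (T : Table k) :
    BddAbove {c | ∃ U, isIrredCover ψ.toPBCM n T U ∧ U.card = c} := by
  refine ⟨(listsLe (T.attrs ×ˢ Finset.range k) n).card, ?_⟩
  rintro c ⟨U, hU, rfl⟩
  exact irredCover_card_le hU

lemma psiA_le_of_cover {ψ : PBCM} {n : ℕ} {T : Table k} (hne : T.rows.Nonempty)
    {U : Finset (List (ℕ × ℕ))} (hcov : isCover ψ n T U)
    (c : List (ℕ × ℕ) → ℕ) (hc : ∀ α ∈ U, ∀ r ∈ (T.applyWord α).rows, c α ∈ T.dec r) :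
    psiA ψ T ≤ n := by
  classical
  obtain ⟨r0, hr0⟩ := hne
  obtain ⟨α0, hα0U, _⟩ := hcov.2 r0 hr0
  have hLne : U.toList ≠ [] := by
    intro h
    have := Finset.mem_toList.mpr hα0U
    rw [h] at this
    exact absurd this List.not_mem_nil
  have hm : 1 ≤ U.toList.length := List.length_pos_iff.mpr hLne
  set idx : Fin (U.toList.length - 1 + 1) → List (ℕ × ℕ) := fun i => U.toList.getD i.val [] with hidx
  have hlt : ∀ i : Fin (U.toList.length - 1 + 1), (i : ℕ) < U.toList.length := by
    intro i
    have := i.isLt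
    omega
  have hidxmem : ∀ i, idx i ∈ U := by
    intro i
    rw [hidx]
    simp only
    rw [List.getD_eq_getElem _ _ (hlt i)]
    exact Finset.mem_toList.mp (List.getElem_mem _)
  have hsurj : ∀ α ∈ U, ∃ i, idx i = α := by
    intro α hα
    obtain ⟨j, hj, hjE⟩ := List.mem_iff_getElem.mp (Finset.mem_toList.mpr hα)
    refine ⟨⟨j, by omega⟩, ?_⟩
    rw [hidx]
    simp only
    rw [List.getD_eq_getElem _ _ (by simpa using hj)]
    exact hjE
  set Γ : KTree k := ⟨U.toList.length - 1, fun i => chain k (idx i) (c (idx i))⟩ with hΓ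
  have hsubpaths : ∀ i, (Γ.sub i).paths = {(idx i, c (idx i))} := fun i => chain_paths _ _
  have hNDT : isNDT T Γ := by
    refine ⟨⟨r0, hr0⟩, ?_, ?_, ?_, ?_⟩
    · intro i
      exact chain_wf _ _ (fun q hq => ((hcov.1 _ (hidxmem i)).1 q hq).2)
    · apply Finset.biUnion_subset.mpr
      intro i _
      exact chain_attrs _ _ _ (fun q hq => ((hcov.1 _ (hidxmem i)).1 q hq).1)
    · intro r hr
      obtain ⟨α, hαU, hsat⟩ := hcov.2 r hr
      obtain ⟨i, rfl⟩ := hsurj α hαU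
      exact ⟨(idx i, c (idx i)), Set.mem_iUnion.mpr ⟨i, by rw [hsubpaths i]; rfl⟩, hsat⟩
    · intro p hp
      obtain ⟨i, hpi⟩ := Set.mem_iUnion.mp hp
      rw [hsubpaths i] at hpi
      rw [Set.mem_singleton_iff.mp hpi]
      exact Or.inr (fun r hr => hc (idx i) (hidxmem i) r hr)
  have htc : treeComp ψ Γ ≤ n := by
    apply treeComp_le
    intro p hp
    obtain ⟨i, hpi⟩ := Set.mem_iUnion.mp hp
    rw [hsubpaths i] at hpi
    rw [Set.mem_singleton_iff.mp hpi]
    exact (hcov.1 _ (hidxmem i)).2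
  exact le_trans (Nat.sInf_le ⟨Γ, hNDT, rfl⟩) htc

end AuxCovers
section AuxDDT

variable {k : ℕ}

lemma exists_DDT (hk : 1 ≤ k) (ψ : PBCM) {n : ℕ} {T : Table k}
    {U : Finset (List (ℕ × ℕ))} (hcov : isCover ψ n T U)
    (c : List (ℕ × ℕ) → ℕ) (hc : ∀ α ∈ U, ∀ r ∈ (T.applyWord α).rows, c α ∈ T.dec r)
    (hne : T.rows.Nonempty) :
    ∃ Γ : KTree k, isDDT T Γ ∧ treeComp ψ Γ ≤ n * U.card := by
  classical
  set s : List ℕ := (U.toList.map fun α => α.map Prod.fst).flatten with hs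
  have hs_mem : ∀ α ∈ U, ∀ q ∈ α, q.1 ∈ s := by
    intro α hα q hq
    rw [hs]
    apply List.mem_flatten.mpr
    exact ⟨α.map Prod.fst, List.mem_map.mpr ⟨α, Finset.mem_toList.mpr hα, rfl⟩,
      List.mem_map.mpr ⟨q, hq, rfl⟩⟩
  have hs_attr : ∀ a ∈ s, a ∈ T.attrs := by
    intro a ha
    rw [hs] at ha
    obtain ⟨l, hl, hal⟩ := List.mem_flatten.mp ha
    obtain ⟨α, hαL, rfl⟩ := List.mem_map.mp hl
    obtain ⟨q, hq, rfl⟩ := List.mem_map.mp hal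
    exact ((hcov.1 α (Finset.mem_toList.mp hαL)).1 q hq).1
  have hψs : ψ.toFun s ≤ n * U.card := by
    rw [hs]
    have := psi_flatten_le ψ (U.toList.map fun α => α.map Prod.fst) n ?_
    · rw [List.length_map, Finset.length_toList] at this
      exact this
    · intro x hx
      obtain ⟨α, hαL, rfl⟩ := List.mem_map.mp hx
      exact (hcov.1 α (Finset.mem_toList.mp hαL)).2
  set g : List (ℕ × ℕ) → ℕ := fun w =>
    if h : ∃ r, r ∈ T.rows ∧ Table.rowSat r w ∧ ∃ α, α ∈ U ∧ Table.rowSat r α then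
      c h.choose_spec.2.2.choose
    else 0 with hg
  set Γ : KTree k := ⟨0, fun _ => fullDT k s g⟩ with hΓ
  have hsub : ∀ i, Γ.sub i = fullDT k s g := fun _ => rfl
  have hpaths : ∀ p ∈ Γ.paths, p ∈ (fullDT k s g).paths := by
    intro p hp
    obtain ⟨i, hpi⟩ := Set.mem_iUnion.mp hp
    rwa [hsub i] at hpi
  have hNDT : isNDT T Γ := by
    refine ⟨hne, ?_, ?_, ?_, ?_⟩
    · intro i
      rw [hsub i]
      exact fullDT_wf hk s g
    · apply Finset.biUnion_subset.mpr
      intro i _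
      rw [hsub i]
      intro a ha
      exact hs_attr a (List.mem_toFinset.mp (fullDT_attrs s g ha))
    · intro r hr
      have hrv : ∀ a ∈ s, r a < k := fun a ha => (T.rows_mem r hr).1 a (hs_attr a ha)
      refine ⟨(s.map fun a => (a, r a), g (s.map fun a => (a, r a))),
        Set.mem_iUnion.mpr ⟨0, by rw [hsub 0]; exact fullDT_paths_mem hk r s g hrv⟩, ?_⟩
      intro q hq
      obtain ⟨a, _, rfl⟩ := List.mem_map.mp hq
      rfl
    · intro p hp
      obtain ⟨hmap, hdec⟩ := fullDT_paths_sub hk s g p (hpaths p hp)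
      by_cases hE : (T.applyWord p.1).rows = ∅
      · exact Or.inl hE
      · right
        obtain ⟨r0, hr0⟩ := Finset.nonempty_iff_ne_empty.mpr hE
        obtain ⟨hr0T, hr0sat⟩ := Finset.mem_filter.mp hr0
        obtain ⟨α, hαU, hαsat⟩ := hcov.2 r0 hr0T
        have hx : ∃ r, r ∈ T.rows ∧ Table.rowSat r p.1 ∧ ∃ α, α ∈ U ∧ Table.rowSat r α :=
          ⟨r0, hr0T, hr0sat, α, hαU, hαsat⟩
        have hgw : g p.1 = c hx.choose_spec.2.2.choose := by
          rw [hg]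
          exact dif_pos hx
        obtain ⟨hr1T, hr1sat, hα1⟩ := hx.choose_spec
        obtain ⟨hα1U, hα1sat⟩ := hα1.choose_spec
        intro r' hr'
        obtain ⟨hr'T, hr'sat⟩ := Finset.mem_filter.mp hr'
        have hr'α : Table.rowSat r' hα1.choose := by
          intro q hq
          have hq1 : q.1 ∈ s := hs_mem _ hα1U q hq
          rw [← hmap] at hq1
          obtain ⟨q', hq'w, hq'1⟩ := List.mem_map.mp hq1
          have e1 : hx.choose q'.1 = q'.2 := hr1sat q' hq'w
          have e2 : hx.choose q.1 = q.2 := hα1sat q hq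
          rw [hq'1] at e1
          have e3 : q'.2 = q.2 := by rw [← e1, e2]
          have e4 : r' q'.1 = q'.2 := hr'sat q' hq'w
          rw [hq'1] at e4
          rw [e4, e3]
        have := hc _ hα1U r' (Finset.mem_filter.mpr ⟨hr'T, hr'α⟩)
        rw [hdec, hgw]
        exact this
  have hDDT : isDDT T Γ := by
    refine ⟨hNDT, rfl, fun i => ?_⟩
    rw [hsub i]
    exact fullDT_det s g
  refine ⟨Γ, hDDT, ?_⟩
  apply le_trans (treeComp_le ψ ?_) hψs
  intro p hp
  obtain ⟨hmap, _⟩ := fullDT_paths_sub hk s g p (hpaths p hp)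
  show ψ.toFun (p.1.map Prod.fst) ≤ ψ.toFun s
  rw [hmap]

end AuxDDT
section AuxMain

variable {k : ℕ}

lemma HSet_bound (hk : 1 ≤ k) (ψ : BCM) (A : Set (Table k)) (n : ℕ)
    (hLfin : (LSet ψ.toPBCM A n).Finite) :
    ∀ c ∈ HSet ψ.toPBCM A n, c ≤ n * Lfun ψ.toPBCM A n := by
  classical
  rintro c ⟨T, hTA, hA, rfl⟩
  by_cases hN : {c | ∃ Γ : KTree k, isNDT T Γ ∧ treeComp ψ.toPBCM Γ = c}.Nonempty
  · obtain ⟨Γ, hΓ, hcomp⟩ : ∃ Γ : KTree k, isNDT T Γ ∧ treeComp ψ.toPBCM Γ = psiA ψ.toPBCM T :=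
      Nat.sInf_mem hN
    have hTne : T.rows.Nonempty := hΓ.1
    set U0 : Finset (List (ℕ × ℕ)) := (KTree.paths_finite Γ).toFinset.image Prod.fst with hU0
    have hmemU0 : ∀ α, α ∈ U0 ↔ ∃ p ∈ Γ.paths, p.1 = α := by
      intro α
      rw [hU0]
      simp [Finset.mem_image, Set.Finite.mem_toFinset]
    have hcov0 : isCover ψ.toPBCM n T U0 := by
      constructor
      · intro α hα
        obtain ⟨p, hp, rfl⟩ := (hmemU0 α).mp hα
        constructor
        · intro q hq
          obtain ⟨h1, h2⟩ := KTree.paths_spec hΓ.2.1 hp q hq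
          exact ⟨hΓ.2.2.1 h1, h2⟩
        · calc ψ.toPBCM.onWord p.1 ≤ treeComp ψ.toPBCM Γ := onWord_le_treeComp _ hp
            _ ≤ n := by rw [hcomp]; exact hA
      · intro r hr
        obtain ⟨p, hp, hsat⟩ := hΓ.2.2.2.1 r hr
        exact ⟨p.1, (hmemU0 _).mpr ⟨p, hp, rfl⟩, hsat⟩
    set c : List (ℕ × ℕ) → ℕ := fun α =>
      if h : ∃ p, p ∈ Γ.paths ∧ p.1 = α then h.choose.2 else 0 with hcdef
    have hc0 : ∀ α ∈ U0, ∀ r ∈ (T.applyWord α).rows, c α ∈ T.dec r := by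
      intro α hα r hr
      obtain ⟨p0, hp0, hp0e⟩ := (hmemU0 α).mp hα
      have hx : ∃ p, p ∈ Γ.paths ∧ p.1 = α := ⟨p0, hp0, hp0e⟩
      have hcα : c α = hx.choose.2 := by rw [hcdef]; exact dif_pos hx
      obtain ⟨hmem, heq⟩ := hx.choose_spec
      rcases hΓ.2.2.2.2 _ hmem with hemp | hcom
      · rw [heq] at hemp
        rw [hemp] at hr
        exact absurd hr (Finset.notMem_empty r)
      · rw [hcα]
        exact hcom r (by rw [heq]; exact hr)
    obtain ⟨U, hUsub, hUirr⟩ := exists_irred_subcover hcov0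
    have hcU : ∀ α ∈ U, ∀ r ∈ (T.applyWord α).rows, c α ∈ T.dec r :=
      fun α hα => hc0 α (hUsub hα)
    obtain ⟨Γd, hΓd, hcompd⟩ := exists_DDT hk ψ.toPBCM hUirr.1 c hcU hTne
    have h1 : psiD ψ.toPBCM T ≤ n * U.card := le_trans (Nat.sInf_le ⟨Γd, hΓd, rfl⟩) hcompd
    have h2 : U.card ≤ lpsi ψ.toPBCM T n := le_csSup (bddAbove_irred ψ n T) ⟨U, hUirr, rfl⟩
    have h3 : lpsi ψ.toPBCM T n ≤ Lfun ψ.toPBCM A n := le_csSup hLfin.bddAbove ⟨T, hTA, rfl⟩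
    exact h1.trans (Nat.mul_le_mul_left n (h2.trans h3))
  · have hE : {c | ∃ Γ : KTree k, isDDT T Γ ∧ treeComp ψ.toPBCM Γ = c} = ∅ := by
      rw [Set.eq_empty_iff_forall_notMem]
      rintro c ⟨Γ, hΓ, h⟩
      exact hN ⟨c, Γ, hΓ.1, h⟩
    show psiD ψ.toPBCM T ≤ _
    rw [psiD, hE, Nat.sInf_empty]
    exact Nat.zero_le _

/-- relabeling of decisions by the covering words -/
noncomputable def relabel (T : Table k) (U : Finset (List (ℕ × ℕ)))
    (hrowcov : ∀ r ∈ T.rows, ∃ α ∈ U, Table.rowSat r α) : Table k where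
  attrs := T.attrs
  rows := T.rows
  dec := fun r => (U.filter fun α => Table.rowSat r α).image Encodable.encode
  rows_mem := T.rows_mem
  dec_nonempty := by
    intro r hr
    obtain ⟨α, hαU, hsat⟩ := hrowcov r hr
    exact ⟨Encodable.encode α, Finset.mem_image_of_mem _ (Finset.mem_filter.mpr ⟨hαU, hsat⟩)⟩

end AuxMain
/-- **Lemma (7M2).** If `L_{ψ,A}` is everywhere defined then `H^∞_{ψ,A}` is everywhere
defined and, for any `n` with `L_{ψ,A}(n) > 0`, `H^∞_{ψ,A}(n) ≥ log_k L_{ψ,A}(n)`. -/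
theorem stmt8 {k : ℕ} (hk : 2 ≤ k) (A : Set (Table k))
    (hclosed : IsClosedClass A) (hnontriv : NontrivialClass A) (ψ : BCM)
    (hL : ∀ n, (LSet ψ.toPBCM A n).Finite) :
    (∀ n, (HSet ψ.toPBCM A n).Finite) ∧
    ∀ n, 0 < Lfun ψ.toPBCM A n →
      Real.logb k (Lfun ψ.toPBCM A n : ℝ) ≤ (Hfun ψ.toPBCM A n : ℝ) := by
  classical
  have hk1 : 1 ≤ k := by omega
  have hHfin : ∀ n, (HSet ψ.toPBCM A n).Finite := by
    intro n
    apply (Set.finite_Iic (n * Lfun ψ.toPBCM A n)).subset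
    intro c hc
    exact HSet_bound hk1 ψ A n (hL n) c hc
  refine ⟨hHfin, ?_⟩
  intro n hLpos
  -- a table attaining L(n)
  have hLmem : Lfun ψ.toPBCM A n ∈ LSet ψ.toPBCM A n := by
    apply Nat.sSup_mem ?_ ((hL n).bddAbove)
    by_contra h
    rw [Set.not_nonempty_iff_eq_empty] at h
    have : Lfun ψ.toPBCM A n = 0 := by
      rw [Lfun, h]
      simp
    omega
  obtain ⟨T, hTA, hlpsiT⟩ := hLmem
  have hlpos : 0 < lpsi ψ.toPBCM T n := by rw [hlpsiT]; exact hLpos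
  -- an irreducible cover attaining lpsi T n
  have hmem : lpsi ψ.toPBCM T n ∈ {c | ∃ U, isIrredCover ψ.toPBCM n T U ∧ U.card = c} := by
    apply Nat.sSup_mem ?_ (bddAbove_irred ψ n T)
    by_contra h
    rw [Set.not_nonempty_iff_eq_empty] at h
    have : lpsi ψ.toPBCM T n = 0 := by
      rw [lpsi, h]
      simp
    omega
  obtain ⟨U, hUirr, hUcard⟩ := hmem
  have hUcard' : U.card = Lfun ψ.toPBCM A n := by rw [hUcard, hlpsiT]
  have hUne : U.Nonempty := Finset.card_pos.mp (by omega)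
  have hTne : T.rows.Nonempty := by
    rw [Finset.nonempty_iff_ne_empty]
    intro hE
    have hcovE : isCover ψ.toPBCM n T ∅ := by
      constructor
      · intro α hα
        exact absurd hα (Finset.notMem_empty α)
      · intro r hr
        rw [hE] at hr
        exact absurd hr (Finset.notMem_empty r)
    exact hUirr.2 ∅ (Finset.empty_ssubset.mpr hUne) hcovE
  have hrowcov : ∀ r ∈ T.rows, ∃ α ∈ U, Table.rowSat r α := hUirr.1.2
  set T' : Table k := relabel T U hrowcov with hT'def
  have hT'attrs : T'.attrs = T.attrs := rfl
  have hT'rows : T'.rows = T.rows := rfl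
  -- T' belongs to A by closedness
  have hT'A : T' ∈ A := by
    apply hclosed T hTA
    refine ⟨∅, Finset.empty_subset _, by rw [hT'attrs, Finset.sdiff_empty], ?_⟩
    rw [hT'rows, Finset.sdiff_empty]
    have heq : ∀ r ∈ T.rows, (fun i => if i ∈ T.attrs then r i else 0) = r := by
      intro r hr
      funext i
      by_cases h : i ∈ T.attrs
      · simp [h]
      · simp [h, ((T.rows_mem r hr).2 i h).symm]
    calc T.rows = T.rows.image id := Finset.image_id.symm
      _ = T.rows.image (fun r i => if i ∈ T.attrs then r i else 0) :=
          (Finset.image_congr (fun r hr => heq r hr)).symm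
  -- U is a cover of T' with common decisions given by encode
  have hcovT' : isCover ψ.toPBCM n T' U := hUirr.1
  have hcT' : ∀ α ∈ U, ∀ r ∈ (T'.applyWord α).rows, Encodable.encode α ∈ T'.dec r := by
    intro α hα r hr
    obtain ⟨hr1, hr2⟩ := Finset.mem_filter.mp hr
    exact Finset.mem_image_of_mem _ (Finset.mem_filter.mpr ⟨hα, hr2⟩)
  have hT'ne : T'.rows.Nonempty := hTne
  have hpsiA' : psiA ψ.toPBCM T' ≤ n := psiA_le_of_cover hT'ne hcovT' _ hcT'
  have hHmem : psiD ψ.toPBCM T' ∈ HSet ψ.toPBCM A n := ⟨T', hT'A, hpsiA', rfl⟩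
  have hDleH : psiD ψ.toPBCM T' ≤ Hfun ψ.toPBCM A n := le_csSup (hHfin n).bddAbove hHmem
  -- a deterministic tree attaining psiD T'
  obtain ⟨Γd, hΓd, _⟩ := exists_DDT hk1 ψ.toPBCM hcovT' (fun α => Encodable.encode α) hcT' hT'ne
  have hDne : {c | ∃ Γ : KTree k, isDDT T' Γ ∧ treeComp ψ.toPBCM Γ = c}.Nonempty :=
    ⟨_, Γd, hΓd, rfl⟩
  obtain ⟨Γ0, hΓ0, hΓ0c⟩ : ∃ Γ : KTree k, isDDT T' Γ ∧ treeComp ψ.toPBCM Γ = psiD ψ.toPBCM T' :=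
    Nat.sInf_mem hDne
  -- injection from U into the paths of Γ0
  have hpriv := private_row hUirr
  have hsel : ∀ α ∈ U, ∃ p, p ∈ Γ0.paths ∧ p.2 = Encodable.encode α := by
    intro α hα
    obtain ⟨r, hrT, hrsat, hruniq⟩ := hpriv α hα
    obtain ⟨p, hpΓ, hpsat⟩ := hΓ0.1.2.2.2.1 r hrT
    refine ⟨p, hpΓ, ?_⟩
    have hrmem : r ∈ (T'.applyWord p.1).rows := Finset.mem_filter.mpr ⟨hrT, hpsat⟩
    rcases hΓ0.1.2.2.2.2 p hpΓ with hemp | hcom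
    · rw [hemp] at hrmem
      exact absurd hrmem (Finset.notMem_empty r)
    · have hd := hcom r hrmem
      obtain ⟨β, hβ, hβe⟩ := Finset.mem_image.mp hd
      obtain ⟨hβU, hβsat⟩ := Finset.mem_filter.mp hβ
      rw [← hβe, hruniq β hβU hβsat]
  set F : List (ℕ × ℕ) → List (ℕ × ℕ) × ℕ := fun α =>
    if h : ∃ p, p ∈ Γ0.paths ∧ p.2 = Encodable.encode α then h.choose else ([], 0) with hF
  have hFspec : ∀ α ∈ U, F α ∈ Γ0.paths ∧ (F α).2 = Encodable.encode α := by
    intro α hα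
    have hx : ∃ p, p ∈ Γ0.paths ∧ p.2 = Encodable.encode α := hsel α hα
    have : F α = hx.choose := by rw [hF]; exact dif_pos hx
    rw [this]
    exact hx.choose_spec
  have hkey : U.card ≤ (KTree.paths Γ0).ncard := by
    rw [← Set.ncard_coe_finset]
    refine Set.ncard_le_ncard_of_injOn F ?_ ?_ (KTree.paths_finite Γ0)
    · intro α hα
      exact (hFspec α (Finset.mem_coe.mp hα)).1
    · intro α hα β hβ hFe
      apply Encodable.encode_injective
      rw [← (hFspec α (Finset.mem_coe.mp hα)).2, ← (hFspec β (Finset.mem_coe.mp hβ)).2, hFe]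
  -- counting the paths of the deterministic tree
  have hcount : (KTree.paths Γ0).ncard ≤ k ^ treeComp ψ.toPBCM Γ0 := by
    have h0 : Γ0.n = 0 := hΓ0.2.1
    have hzlt : 0 < Γ0.n + 1 := Nat.succ_pos _
    have hsingle : KTree.paths Γ0 = (Γ0.sub ⟨0, hzlt⟩).paths := by
      apply Set.Subset.antisymm
      · intro p hp
        obtain ⟨i, hpi⟩ := Set.mem_iUnion.mp hp
        have hieq : i = ⟨0, hzlt⟩ := by
          apply Fin.ext
          have := i.isLt
          omega
        rwa [hieq] at hpi
      · intro p hp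
        exact Set.mem_iUnion.mpr ⟨_, hp⟩
    rw [hsingle]
    apply DTree.paths_card_le hk1 _ (hΓ0.1.2.1 _) (hΓ0.2.2 _)
    intro p hp
    have hp' : p ∈ Γ0.paths := by rw [hsingle]; exact hp
    calc p.1.length = (p.1.map Prod.fst).length := (List.length_map _).symm
      _ ≤ ψ.toFun (p.1.map Prod.fst) := ψ.bdd _
      _ ≤ treeComp ψ.toPBCM Γ0 := onWord_le_treeComp _ hp'
  have hfinal : Lfun ψ.toPBCM A n ≤ k ^ Hfun ψ.toPBCM A n := by
    calc Lfun ψ.toPBCM A n = U.card := hUcard'.symm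
      _ ≤ (KTree.paths Γ0).ncard := hkey
      _ ≤ k ^ treeComp ψ.toPBCM Γ0 := hcount
      _ = k ^ psiD ψ.toPBCM T' := by rw [hΓ0c]
      _ ≤ k ^ Hfun ψ.toPBCM A n := Nat.pow_le_pow_right (by omega) hDleH
  have hb : (1 : ℝ) < (k : ℝ) := by exact_mod_cast (by omega : 1 < k)
  have hx : (0 : ℝ) < (Lfun ψ.toPBCM A n : ℝ) := by exact_mod_cast hLpos
  rw [Real.logb_le_iff_le_rpow hb hx, Real.rpow_natCast]
  exact_mod_cast hfinal
end

section
/- Let k ≥ 2 be an integer, ψ a bounded complexity measure and T ∈ M_k^∞ ∖ M_k^{∞c}. Then ψ^a(T) = max{M_ψ(T,δ̄) : δ̄ ∈ Δ(T)}. -/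
open Classical

section Aux

lemma sublist_perm_append {α : Type*} {l l' : List α} (h : l.Sublist l') :
    ∃ d, l'.Perm (l ++ d) := by
  induction h with
  | slnil => exact ⟨[], by simp⟩
  | cons a h ih =>
      obtain ⟨d, hd⟩ := ih
      exact ⟨a :: d, (hd.cons a).trans List.perm_middle.symm⟩
  | cons_cons a h ih =>
      obtain ⟨d, hd⟩ := ih
      exact ⟨d, hd.cons a⟩

lemma PBCM.le_of_subperm (ψ : PBCM) {l l' : List ℕ} (h : l.Subperm l') :
    ψ.toFun l ≤ ψ.toFun l' := by
  obtain ⟨m, hm, hs⟩ := h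
  obtain ⟨d, hd⟩ := sublist_perm_append hs
  calc ψ.toFun l = ψ.toFun m := ψ.perm _ _ hm.symm
    _ ≤ ψ.toFun (m ++ d) := ψ.mono _ _
    _ = ψ.toFun l' := (ψ.perm _ _ hd).symm

lemma DTree.paths_finite_s9 {k : ℕ} (t : DTree k) : t.paths.Finite := by
  induction t with
  | leaf d => exact Set.finite_singleton _
  | node a n lab ch ih => exact Set.finite_iUnion fun i => (ih i).image _

lemma DTree.attr_mem_of_path {k : ℕ} (t : DTree k) {p} (hp : p ∈ t.paths) :
    ∀ q ∈ p.1, q.1 ∈ t.attrs := by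
  induction t generalizing p with
  | leaf d =>
      simp only [paths, Set.mem_singleton_iff] at hp
      subst hp; intro q hq; simp at hq
  | node a n lab ch ih =>
      simp only [paths, Set.mem_iUnion, Set.mem_image] at hp
      obtain ⟨i, p', hp', rfl⟩ := hp
      intro q hq
      simp only [List.mem_cons] at hq
      rcases hq with rfl | hq
      · simp [attrs]
      · simp only [attrs, Finset.mem_insert, Finset.mem_biUnion]
        exact Or.inr ⟨i, Finset.mem_univ i, ih i hp' q hq⟩

/-- a chain decision tree following the word `α` and ending in leaf `d` -/
def chainT {k : ℕ} : List (ℕ × ℕ) → ℕ → DTree k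
  | [], d => .leaf d
  | q :: α, d => .node q.1 0 (fun _ => q.2) (fun _ => chainT α d)

lemma chainT_paths {k : ℕ} (α : List (ℕ × ℕ)) (d : ℕ) :
    (chainT (k := k) α d).paths = {(α, d)} := by
  induction α with
  | nil => rfl
  | cons q α ih =>
      ext p
      simp only [chainT, DTree.paths, ih, Set.mem_iUnion, Set.mem_image,
        Set.mem_singleton_iff]
      constructor
      · rintro ⟨i, p', rfl, rfl⟩; rfl
      · rintro rfl; exact ⟨0, (α, d), rfl, rfl⟩

lemma chainT_wf {k : ℕ} (α : List (ℕ × ℕ)) (d : ℕ) (h : ∀ q ∈ α, q.2 < k) :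
    (chainT (k := k) α d).wf := by
  induction α with
  | nil => trivial
  | cons q α ih =>
      exact ⟨fun _ => h q (by simp), fun _ => ih fun q' hq' => h q' (by simp [hq'])⟩

lemma chainT_attrs {k : ℕ} (α : List (ℕ × ℕ)) (d : ℕ) :
    (chainT (k := k) α d).attrs ⊆ (α.map Prod.fst).toFinset := by
  induction α with
  | nil => simp [chainT, DTree.attrs]
  | cons q α ih =>
      intro x hx
      simp only [chainT, DTree.attrs, Finset.mem_insert, Finset.mem_biUnion] at hx
      simp only [List.map_cons, List.toFinset_cons, Finset.mem_insert]
      rcases hx with rfl | ⟨i, _, hi⟩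
      · exact Or.inl rfl
      · exact Or.inr (ih hi)

lemma treeComp_bddAbove {k : ℕ} (ψ : PBCM) (Γ : KTree k) :
    BddAbove {c | ∃ p ∈ Γ.paths, ψ.onWord p.1 = c} := by
  have h : Γ.paths.Finite := Set.finite_iUnion fun i => DTree.paths_finite_s9 _
  have he : {c | ∃ p ∈ Γ.paths, ψ.onWord p.1 = c} = (fun p => ψ.onWord p.1) '' Γ.paths := by
    ext c; simp [Set.mem_image, eq_comm]
  rw [he]
  exact (h.image _).bddAbove

lemma MpsiAt_spec {k : ℕ} (ψ : PBCM) (T : Table k) {r : ℕ → ℕ} (hr : r ∈ T.rows) :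
    ∃ s : Finset ℕ, s ⊆ T.attrs ∧
      (T.applyWord ((s.sort (· ≤ ·)).map fun i => (i, r i))).hasCommon ∧
      ψ.onSet s = MpsiAt ψ T r := by
  have hne : {p | ∃ s : Finset ℕ, s ⊆ T.attrs ∧
      (T.applyWord ((s.sort (· ≤ ·)).map fun i => (i, r i))).hasCommon ∧
      ψ.onSet s = p}.Nonempty := by
    refine ⟨ψ.onSet T.attrs, T.attrs, Finset.Subset.refl _, ?_, rfl⟩
    obtain ⟨d, hd⟩ := T.dec_nonempty r hr
    refine ⟨d, fun r' hr' => ?_⟩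
    have h1 := (Finset.mem_filter.mp hr').1
    have h2 : Table.rowSat r' ((T.attrs.sort (· ≤ ·)).map fun i => (i, r i)) :=
      (Finset.mem_filter.mp hr').2
    have hrr : r' = r := by
      funext i
      by_cases hi : i ∈ T.attrs
      · exact h2 (i, r i) (by
          simp only [List.mem_map]
          exact ⟨i, (Finset.mem_sort _).2 hi, rfl⟩)
      · rw [(T.rows_mem r' h1).2 i hi, (T.rows_mem r hr).2 i hi]
    show d ∈ T.dec r'
    rw [hrr]; exact hd
  have hmem := Nat.sInf_mem hne
  obtain ⟨s, hs1, hs2, hs3⟩ := hmem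
  exact ⟨s, hs1, hs2, hs3⟩

lemma MpsiAt_le_treeComp {k : ℕ} (ψ : PBCM) {T : Table k} {Γ : KTree k} (h : isNDT T Γ)
    {r : ℕ → ℕ} (hr : r ∈ T.rows) : MpsiAt ψ T r ≤ treeComp ψ Γ := by
  obtain ⟨_, hwf, hattr, hcov, hdec⟩ := h
  obtain ⟨p, hp, hsat⟩ := hcov r hr
  set s : Finset ℕ := (p.1.map Prod.fst).toFinset with hsdef
  have hmemfst : ∀ q ∈ p.1, q.1 ∈ s := by
    intro q hq
    simp only [hsdef, List.mem_toFinset, List.mem_map]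
    exact ⟨q, hq, rfl⟩
  have hsub : s ⊆ T.attrs := by
    intro x hx
    simp only [hsdef, List.mem_toFinset, List.mem_map] at hx
    obtain ⟨q, hq, rfl⟩ := hx
    obtain ⟨i, hpi⟩ := Set.mem_iUnion.mp hp
    exact hattr (Finset.mem_biUnion.2
      ⟨i, Finset.mem_univ i, DTree.attr_mem_of_path _ hpi q hq⟩)
  have hrmem : r ∈ (T.applyWord p.1).rows := Finset.mem_filter.2 ⟨hr, hsat⟩
  have hcomd : ∀ r' ∈ (T.applyWord p.1).rows, p.2 ∈ T.dec r' := by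
    rcases hdec p hp with he | hd
    · rw [he] at hrmem; simp at hrmem
    · exact hd
  have hcommon : (T.applyWord ((s.sort (· ≤ ·)).map fun i => (i, r i))).hasCommon := by
    refine ⟨p.2, fun r' hr' => ?_⟩
    have h1 := (Finset.mem_filter.mp hr').1
    have h2 : Table.rowSat r' ((s.sort (· ≤ ·)).map fun i => (i, r i)) :=
      (Finset.mem_filter.mp hr').2
    have hsat' : Table.rowSat r' p.1 := by
      intro q hq
      have : r' q.1 = r q.1 := h2 (q.1, r q.1) (by
        simp only [List.mem_map]
        exact ⟨q.1, (Finset.mem_sort _).2 (hmemfst q hq), rfl⟩)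
      rw [this, hsat q hq]
    exact hcomd r' (Finset.mem_filter.2 ⟨h1, hsat'⟩)
  have h1 : MpsiAt ψ T r ≤ ψ.onSet s := Nat.sInf_le ⟨s, hsub, hcommon, rfl⟩
  have h2 : ψ.onSet s ≤ ψ.onWord p.1 := by
    refine ψ.le_of_subperm (List.Nodup.subperm (Finset.sort_nodup _ _) ?_)
    intro x hx
    have := (Finset.mem_sort (α := ℕ) (· ≤ ·)).1 hx
    simpa [hsdef] using this
  have h3 : ψ.onWord p.1 ≤ treeComp ψ Γ :=
    le_csSup (treeComp_bddAbove ψ Γ) ⟨p, hp, rfl⟩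
  omega

lemma exists_good_ndt {k : ℕ} (ψ : PBCM) (T : Table k) (hne : T.rows.Nonempty) :
    ∃ Γ : KTree k, isNDT T Γ ∧
      ∀ c ∈ {c | ∃ p ∈ Γ.paths, ψ.onWord p.1 = c}, ∃ r ∈ T.rows, MpsiAt ψ T r = c := by
  choose s hs hcom hval using fun (r : ℕ → ℕ) (hr : r ∈ T.rows) => MpsiAt_spec ψ T hr
  choose d hd using hcom
  -- the word attached to a row
  set wrd : ∀ r ∈ T.rows, List (ℕ × ℕ) :=
    fun r hr => ((s r hr).sort (· ≤ ·)).map fun i => (i, r i) with hwrd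
  set L : List (ℕ → ℕ) := T.rows.toList with hL
  have hLne : L ≠ [] := by
    rw [hL, Ne, Finset.toList_eq_nil]
    exact Finset.nonempty_iff_ne_empty.1 hne
  have hlen : L.length - 1 + 1 = L.length :=
    Nat.succ_pred_eq_of_pos (List.length_pos_iff.2 hLne)
  set rowOf : Fin (L.length - 1 + 1) → (ℕ → ℕ) := fun i => L.get (Fin.cast hlen i)
    with hrowOf
  have hmem : ∀ i, rowOf i ∈ T.rows := fun i =>
    Finset.mem_toList.1 (List.mem_iff_get.2 ⟨Fin.cast hlen i, rfl⟩)
  refine ⟨⟨L.length - 1, fun i => chainT (wrd (rowOf i) (hmem i)) (d (rowOf i) (hmem i))⟩,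
    ⟨hne, ?_, ?_, ?_, ?_⟩, ?_⟩
  · -- wf
    intro i
    apply chainT_wf
    intro q hq
    simp only [hwrd, List.mem_map] at hq
    obtain ⟨j, hj, rfl⟩ := hq
    have hj' : j ∈ s (rowOf i) (hmem i) := (Finset.mem_sort _).1 hj
    exact (T.rows_mem _ (hmem i)).1 j (hs _ _ hj')
  · -- attrs
    intro x hx
    simp only [KTree.attrs, Finset.mem_biUnion] at hx
    obtain ⟨i, _, hxi⟩ := hx
    have := chainT_attrs _ _ hxi
    simp only [hwrd, List.map_map, List.mem_toFinset] at this
    have : x ∈ (s (rowOf i) (hmem i)).sort (· ≤ ·) := by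
      simpa [Function.comp] using this
    exact hs _ _ ((Finset.mem_sort _).1 this)
  · -- cover
    intro r hr
    obtain ⟨j, hj⟩ := List.mem_iff_get.1 (Finset.mem_toList.2 hr)
    set i : Fin (L.length - 1 + 1) := Fin.cast hlen.symm j with hi
    have hri : rowOf i = r := by
      simp only [hrowOf, hi, Fin.cast_cast]
      simpa using hj
    refine ⟨(wrd (rowOf i) (hmem i), d (rowOf i) (hmem i)), ?_, ?_⟩
    · exact Set.mem_iUnion.2 ⟨i, by rw [chainT_paths]; rfl⟩
    · intro q hq
      simp only [hwrd, List.mem_map] at hq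
      obtain ⟨j', _, rfl⟩ := hq
      exact (congrFun hri j').symm
  · -- decisions
    intro p hp
    obtain ⟨i, hpi⟩ := Set.mem_iUnion.mp hp
    rw [chainT_paths] at hpi
    rcases hpi
    exact Or.inr (hd (rowOf i) (hmem i))
  · -- costs
    intro c hc
    obtain ⟨p, hp, hpc⟩ := hc
    obtain ⟨i, hpi⟩ := Set.mem_iUnion.mp hp
    rw [chainT_paths] at hpi
    rcases hpi
    refine ⟨rowOf i, hmem i, ?_⟩
    rw [← hval (rowOf i) (hmem i), ← hpc]
    simp only [PBCM.onWord, PBCM.onSet, hwrd, List.map_map]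
    exact (congrArg ψ.toFun (List.map_id ((s (rowOf i) (hmem i)).sort (· ≤ ·)))).symm

end Aux

/-- **Lemma (7M3).** For a bounded complexity measure `ψ` and `T ∈ M_k^∞ ∖ M_k^{∞c}`,
`ψ^a(T) = max{M_ψ(T,δ̄) : δ̄ ∈ Δ(T)}`. -/
theorem stmt9 {k : ℕ} (hk : 2 ≤ k) (ψ : BCM) (T : Table k) (hc : ¬ T.hasCommon) :
    psiA ψ.toPBCM T = sSup {c | ∃ r ∈ T.rows, MpsiAt ψ.toPBCM T r = c} := by
  have hne : T.rows.Nonempty := by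
    rw [Finset.nonempty_iff_ne_empty]
    intro h
    exact hc ⟨0, fun r hr => by simp [h] at hr⟩
  obtain ⟨Γ, hΓ, hpaths⟩ := exists_good_ndt ψ.toPBCM T hne
  have hRbdd : BddAbove {c | ∃ r ∈ T.rows, MpsiAt ψ.toPBCM T r = c} := by
    have he : {c | ∃ r ∈ T.rows, MpsiAt ψ.toPBCM T r = c} =
        (fun r => MpsiAt ψ.toPBCM T r) '' (T.rows : Set (ℕ → ℕ)) := by
      ext c; simp [eq_comm]
    rw [he]
    exact (T.rows.finite_toSet.image _).bddAbove
  apply le_antisymm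
  · refine le_trans (Nat.sInf_le ⟨Γ, hΓ, rfl⟩) (csSup_le' ?_)
    intro c hc'
    obtain ⟨r, hr, hv⟩ := hpaths c hc'
    exact hv ▸ le_csSup hRbdd ⟨r, hr, rfl⟩
  · apply csSup_le'
    rintro c ⟨r, hr, rfl⟩
    have hmem : psiA ψ.toPBCM T ∈
        {c | ∃ Γ : KTree k, isNDT T Γ ∧ treeComp ψ.toPBCM Γ = c} :=
      Nat.sInf_mem ⟨_, Γ, hΓ, rfl⟩
    obtain ⟨Γ₀, hΓ₀, hΓ₀c⟩ := hmem
    exact hΓ₀c ▸ MpsiAt_le_treeComp ψ.toPBCM hΓ₀ hr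
end

section
/- For any k ∈ ℕ∖{0}, the minimum depth of a nondeterministic decision tree for the table T_k satisfies h^a(T_k) ≤ 3. -/
open Classical

namespace Stmt10Aux

/-- a chain-shaped subtree -/
def chain : List (ℕ × ℕ) → ℕ → DTree 2
  | [], d => .leaf d
  | (a, v) :: rest, d => .node a 0 (fun _ => v) (fun _ => chain rest d)

lemma chain_paths (l : List (ℕ × ℕ)) (d : ℕ) : (chain l d).paths = {(l, d)} := by
  induction l with
  | nil => rfl
  | cons q rest ih =>
    obtain ⟨a, v⟩ := q
    ext p
    simp only [chain, DTree.paths, ih, Set.mem_iUnion, Set.mem_image, Set.mem_singleton_iff]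
    constructor
    · rintro ⟨i, x, rfl, rfl⟩; rfl
    · rintro rfl; exact ⟨0, (rest, d), rfl, rfl⟩

lemma chain_wf (l : List (ℕ × ℕ)) (d : ℕ) (h : ∀ q ∈ l, q.2 < 2) : (chain l d).wf := by
  induction l with
  | nil => trivial
  | cons q rest ih =>
    obtain ⟨a, v⟩ := q
    exact ⟨fun _ => h (a, v) (by simp), fun _ => ih fun q hq => h q (by simp [hq])⟩

lemma chain_attrs (l : List (ℕ × ℕ)) (d : ℕ) {x : ℕ} (hx : x ∈ (chain l d).attrs) :
    ∃ q ∈ l, q.1 = x := by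
  induction l with
  | nil => simp [chain, DTree.attrs] at hx
  | cons q rest ih =>
    obtain ⟨a, v⟩ := q
    simp only [chain, DTree.attrs, Finset.mem_insert, Finset.mem_biUnion] at hx
    rcases hx with h | ⟨_, _, hx⟩
    · exact ⟨(a, v), by simp [h]⟩
    · obtain ⟨q, hq, rfl⟩ := ih hx
      exact ⟨q, by simp [hq]⟩

lemma mnum_succ (L : ℕ) : mnum (L + 1) = mnum L + (L + 1) := by
  unfold mnum
  have h : (L + 1) * (L + 1 + 1) = L * (L + 1) + (L + 1) * 2 := by ring
  rw [h, Nat.add_mul_div_right _ _ (by norm_num : 0 < 2)]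

lemma mnum_mono : Monotone mnum := by
  have h : ∀ n, mnum n ≤ mnum (n + 1) := fun n => by rw [mnum_succ]; omega
  exact monotone_nat_of_le_succ h

lemma le_mnum_self (i : ℕ) (hi : 1 ≤ i) : i ≤ mnum i := by
  unfold mnum
  rw [Nat.le_div_iff_mul_le (by norm_num : 0 < 2)]
  nlinarith

lemma le_mnum_layer (i : ℕ) (hi : 1 ≤ i) : i ≤ mnum (layer i) := by
  have : layer i ∈ {L | i ≤ mnum L} := Nat.sInf_mem ⟨i, le_mnum_self i hi⟩
  exact this

lemma layer_pos (i : ℕ) (hi : 1 ≤ i) : 1 ≤ layer i := by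
  by_contra h
  have h0 : layer i = 0 := by omega
  have := le_mnum_layer i hi
  rw [h0] at this
  simp [mnum] at this
  omega

lemma layer_le {i k : ℕ} (hik : i ≤ mnum k) : layer i ≤ k := Nat.sInf_le hik

lemma mnum_layer_pred_lt (i : ℕ) (hi : 1 ≤ i) : mnum (layer i - 1) < i := by
  by_contra h
  push_neg at h
  have hmem : layer i - 1 ∈ {L | i ≤ mnum L} := h
  have := Nat.sInf_le hmem
  have := layer_pos i hi
  unfold layer at *
  omega

lemma layer_eq (j L : ℕ) (h1 : mnum L < j) (h2 : j ≤ mnum (L + 1)) : layer j = L + 1 := by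
  have hj1 : 1 ≤ j := by have := mnum_mono (Nat.zero_le L); simp [mnum] at this ⊢; omega
  have hle : layer j ≤ L + 1 := layer_le h2
  have hge : ¬ layer j ≤ L := by
    intro hcon
    have := le_mnum_layer j hj1
    have := mnum_mono hcon
    omega
  omega

lemma child_bounds (i : ℕ) (hi : 1 ≤ i) :
    mnum (layer i) < lchild i ∧ rchild i ≤ mnum (layer i + 1) := by
  have hL := layer_pos i hi
  have hpred := mnum_layer_pred_lt i hi
  have hub := le_mnum_layer i hi
  have hrec : mnum (layer i) = mnum (layer i - 1) + layer i := by
    have := mnum_succ (layer i - 1)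
    have h : layer i - 1 + 1 = layer i := by omega
    rw [h] at this
    omega
  have hrec2 := mnum_succ (layer i)
  unfold lchild rchild
  omega

lemma layer_lchild (i : ℕ) (hi : 1 ≤ i) : layer (lchild i) = layer i + 1 := by
  obtain ⟨h1, h2⟩ := child_bounds i hi
  exact layer_eq _ _ h1 (by unfold lchild rchild at *; omega)

lemma layer_rchild (i : ℕ) (hi : 1 ≤ i) : layer (rchild i) = layer i + 1 := by
  obtain ⟨h1, h2⟩ := child_bounds i hi
  exact layer_eq _ _ (by unfold lchild rchild at *; omega) h2

/-- descend from a 1-node to a terminal witness -/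
lemma exists_terminal (k : ℕ) (r : ℕ → ℕ) (hbin : ∀ j, r j = 0 ∨ r j = 1) :
    ∀ d i, 1 ≤ i → i ≤ mnum k → r i = 1 → k - layer i ≤ d →
    ∃ j, 1 ≤ j ∧ j ≤ mnum k ∧ r j = 1 ∧
      (layer j = k ∨ (layer j ≠ k ∧ r (lchild j) = 0 ∧ r (rchild j) = 0)) := by
  intro d
  induction d with
  | zero =>
    intro i h1 h2 h3 h4
    have := layer_le h2
    exact ⟨i, h1, h2, h3, Or.inl (by omega)⟩
  | succ d ih =>
    intro i h1 h2 h3 h4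
    have hlk := layer_le h2
    by_cases hk : layer i = k
    · exact ⟨i, h1, h2, h3, Or.inl hk⟩
    · have hlt : layer i < k := by omega
      obtain ⟨hcb1, hcb2⟩ := child_bounds i h1
      have hmk : mnum (layer i + 1) ≤ mnum k := mnum_mono (by omega)
      have hl1 : 1 ≤ lchild i := by
        have := layer_pos i h1
        unfold lchild; omega
      have hr1 : 1 ≤ rchild i := by unfold rchild; omega
      have hlle : lchild i ≤ mnum k := by unfold lchild rchild at *; omega
      have hrle : rchild i ≤ mnum k := by omega
      rcases hbin (lchild i) with hl0 | hl1'
      · rcases hbin (rchild i) with hr0 | hr1'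
        · exact ⟨i, h1, h2, h3, Or.inr ⟨hk, hl0, hr0⟩⟩
        · exact ih (rchild i) hr1 hrle hr1' (by rw [layer_rchild i h1]; omega)
      · exact ih (lchild i) hl1 hlle hl1' (by rw [layer_lchild i h1]; omega)


/-- the word along the subtree for node `j` (`j = 0` gives the decision-0 path) -/
noncomputable def word (k j : ℕ) : List (ℕ × ℕ) :=
  if j = 0 then [(1, 0)]
  else if layer j = k then [(j, 1)]
  else [(j, 1), (lchild j, 0), (rchild j, 0)]

/-- the nondeterministic decision tree of depth ≤ 3 for `T_k` -/
noncomputable def tree (k : ℕ) : KTree 2 := ⟨mnum k, fun j => chain (word k j.val) j.val⟩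

lemma mem_tree_paths (k : ℕ) (p : List (ℕ × ℕ) × ℕ) :
    p ∈ (tree k).paths ↔ ∃ j : Fin (mnum k + 1), p = (word k j.val, j.val) := by
  simp only [tree, KTree.paths, chain_paths, Set.mem_iUnion, Set.mem_singleton_iff]

lemma one_le_mnum (k : ℕ) (hk : 1 ≤ k) : 1 ≤ mnum k := by
  have := mnum_mono hk
  have h1 : mnum 1 = 1 := by norm_num [mnum]
  omega

lemma word_mem (k j : ℕ) (hk : 1 ≤ k) (hj : j ≤ mnum k) (q : ℕ × ℕ) (hq : q ∈ word k j) :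
    q.1 ∈ Finset.Icc 1 (mnum k) ∧ q.2 < 2 := by
  have hm1 := one_le_mnum k hk
  unfold word at hq
  split_ifs at hq with h0 hl
  · simp only [List.mem_singleton] at hq
    subst hq
    simp [Finset.mem_Icc]; omega
  · simp only [List.mem_singleton] at hq
    subst hq
    simp [Finset.mem_Icc]; omega
  · have hj1 : 1 ≤ j := Nat.one_le_iff_ne_zero.mpr h0
    have hlk : layer j < k := lt_of_le_of_ne (layer_le hj) hl
    obtain ⟨hc1, hc2⟩ := child_bounds j hj1
    have hmono := mnum_mono (show layer j + 1 ≤ k by omega)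
    have hLpos := layer_pos j hj1
    simp only [List.mem_cons, List.mem_singleton, List.not_mem_nil, or_false] at hq
    rcases hq with rfl | rfl | rfl <;> simp [Finset.mem_Icc] <;>
      unfold lchild rchild at * <;> omega

lemma word_len (k j : ℕ) : (word k j).length ≤ 3 := by
  unfold word; split_ifs <;> simp

end Stmt10Aux

/-- **Lemma (7M4).** For any `k ≥ 1`, `h^a(T_k) ≤ 3`. -/
theorem stmt10 (k : ℕ) (hk : 1 ≤ k) : psiA depthCM.toPBCM (Tk k) ≤ 3 := by
  classical
  have hm1 := Stmt10Aux.one_le_mnum k hk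
  have hattrs : (Tk k).attrs = Finset.Icc 1 (mnum k) := rfl
  -- basic facts about rows
  have hbin : ∀ r ∈ (Tk k).rows, ∀ j, r j = 0 ∨ r j = 1 := by
    intro r hr j
    obtain ⟨h1, h2⟩ := (Tk k).rows_mem r hr
    by_cases hj : j ∈ (Tk k).attrs
    · have := h1 j hj; omega
    · exact Or.inl (h2 j hj)
  have hNDT : isNDT (Tk k) (Stmt10Aux.tree k) := by
    refine ⟨?_, ?_, ?_, ?_, ?_⟩
    · -- nonempty
      refine ⟨(fun i => if h : i ∈ Finset.Icc 1 (mnum k) then (fun i _ => 0) i h else 0), ?_⟩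
      exact Finset.mem_image_of_mem _ (Finset.mem_pi.mpr fun i hi => by simp)
    · -- wf
      intro j
      have hjle : (j : ℕ) ≤ mnum k := by
        have := j.isLt; simp only [Stmt10Aux.tree] at this; omega
      exact Stmt10Aux.chain_wf _ _ fun q hq =>
        (Stmt10Aux.word_mem k j.val hk hjle q hq).2
    · -- attrs
      intro x hx
      simp only [KTree.attrs, Finset.mem_biUnion] at hx
      obtain ⟨j, -, hx⟩ := hx
      have hjle : (j : ℕ) ≤ mnum k := by
        have := j.isLt; simp only [Stmt10Aux.tree] at this; omega
      obtain ⟨q, hq, rfl⟩ := Stmt10Aux.chain_attrs _ _ hx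
      rw [hattrs]
      exact (Stmt10Aux.word_mem k j.val hk hjle q hq).1
    · -- covering
      intro r hr
      have hb := hbin r hr
      rcases hb 1 with h1 | h1
      · refine ⟨(Stmt10Aux.word k 0, 0), ?_, ?_⟩
        · exact (Stmt10Aux.mem_tree_paths k _).mpr ⟨⟨0, by omega⟩, rfl⟩
        · intro q hq
          have hq' : q = (1, 0) := by simpa [Stmt10Aux.word] using hq
          subst hq'; exact h1
      · obtain ⟨j, hj1, hj2, hj3, hj4⟩ :=
          Stmt10Aux.exists_terminal k r hb k 1 le_rfl hm1 h1 (by omega)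
        refine ⟨(Stmt10Aux.word k j, j), ?_, ?_⟩
        · exact (Stmt10Aux.mem_tree_paths k _).mpr ⟨⟨j, by omega⟩, rfl⟩
        · intro q hq
          have hj0 : j ≠ 0 := by omega
          rcases hj4 with hc | ⟨hc, hcl, hcr⟩
          · simp only [Stmt10Aux.word, if_neg hj0, if_pos hc, List.mem_singleton] at hq
            subst hq; exact hj3
          · simp only [Stmt10Aux.word, if_neg hj0, if_neg hc, List.mem_cons,
              List.mem_singleton, List.not_mem_nil, or_false] at hq
            rcases hq with rfl | rfl | rfl
            · exact hj3
            · exact hcl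
            · exact hcr
    · -- correctness
      intro p hp
      obtain ⟨j, rfl⟩ := (Stmt10Aux.mem_tree_paths k _).mp hp
      right
      intro r hr
      have hr' := Finset.mem_filter.mp hr
      obtain ⟨hrT, hsat⟩ := hr'
      have hmem : (j : ℕ) ∈ nuk k r := by
        simp only [nuk, Finset.mem_filter, Finset.mem_range]
        refine ⟨by omega, ?_⟩
        by_cases hj0 : (j : ℕ) = 0
        · rw [if_pos hj0]
          have := hsat (1, 0) (by simp [Stmt10Aux.word, hj0])
          exact this
        · rw [if_neg hj0]
          by_cases hc : layer (j : ℕ) = k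
          · rw [if_pos hc]
            exact hsat ((j : ℕ), 1) (by simp [Stmt10Aux.word, hj0, hc])
          · rw [if_neg hc]
            refine ⟨hsat ((j : ℕ), 1) (by simp [Stmt10Aux.word, hj0, hc]), ?_, ?_⟩
            · exact hsat (lchild (j : ℕ), 0) (by simp [Stmt10Aux.word, hj0, hc])
            · exact hsat (rchild (j : ℕ), 0) (by simp [Stmt10Aux.word, hj0, hc])
      have hne : (nuk k r).Nonempty := ⟨_, hmem⟩
      show (j : ℕ) ∈ (Tk k).dec r
      simp only [Tk, fullTable, if_pos hne]
      exact hmem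
  have hcomp : treeComp depthCM.toPBCM (Stmt10Aux.tree k) ≤ 3 := by
    apply csSup_le'
    rintro c ⟨p, hp, rfl⟩
    obtain ⟨j, rfl⟩ := (Stmt10Aux.mem_tree_paths k _).mp hp
    simp only [PBCM.onWord, depthCM, List.length_map]
    exact Stmt10Aux.word_len k j
  calc psiA depthCM.toPBCM (Tk k) ≤ treeComp depthCM.toPBCM (Stmt10Aux.tree k) :=
        Nat.sInf_le ⟨Stmt10Aux.tree k, hNDT, rfl⟩
    _ ≤ 3 := hcomp
end

section
/- Let k ∈ ℕ∖{0}, let f_{i₁},…,f_{i_n} ∈ {f₁,…,f_{m(k)}}, and let T = T_k^*(f_{i₁},0)⋯(f_{i_n},0). If T ≠ Λ, then r(T) ≥ max(1, k − n). -/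
open Classical

namespace Stmt11Aux

lemma mnum_succ (L : ℕ) : mnum (L+1) = mnum L + L + 1 := by
  obtain ⟨m, hm⟩ : ∃ m, L * (L+1) = 2*m := (Nat.even_mul_succ_self L).elim fun m hm => ⟨m, by omega⟩
  have h2 : (L+1) * (L+1+1) = 2*m + 2*(L+1) := by nlinarith
  unfold mnum; omega

lemma mnum_mono : Monotone mnum := monotone_nat_of_le_succ fun n => by rw [mnum_succ]; omega

lemma layer_eq {a i : ℕ} (h1 : mnum a < i) (h2 : i ≤ mnum (a+1)) : layer i = a + 1 := by
  have hmem : a + 1 ∈ {L | i ≤ mnum L} := h2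
  have hle : layer i ≤ a + 1 := Nat.sInf_le hmem
  have hmem2 : i ≤ mnum (layer i) := Nat.sInf_mem ⟨a+1, hmem⟩
  by_contra h
  have h3 : layer i ≤ a := by omega
  have := mnum_mono h3
  omega

lemma pathNode_bounds (c : ℕ → Bool) : ∀ j, mnum j < pathNode c j ∧ pathNode c j ≤ mnum (j+1) := by
  intro j
  induction j with
  | zero => simp [pathNode, mnum]
  | succ j ih =>
    have hlay : layer (pathNode c j) = j + 1 := layer_eq ih.1 ih.2
    have h1 : mnum (j+1+1) = mnum (j+1) + (j+1) + 1 := mnum_succ (j+1)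
    have h0 : mnum (j+1) = mnum j + j + 1 := mnum_succ j
    simp only [pathNode]
    by_cases hc : c j <;> simp [hc, lchild, rchild, hlay] <;> omega

lemma layer_pathNode (c : ℕ → Bool) (j : ℕ) : layer (pathNode c j) = j + 1 :=
  layer_eq (pathNode_bounds c j).1 (pathNode_bounds c j).2

lemma pathNode_congr {c c' : ℕ → Bool} : ∀ {j}, (∀ j' < j, c j' = c' j') → pathNode c j = pathNode c' j := by
  intro j
  induction j with
  | zero => intro _; rfl
  | succ j ih =>
    intro h
    have h1 : pathNode c j = pathNode c' j := ih fun j' hj' => h j' (by omega)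
    simp only [pathNode, h j (by omega), h1]

/-- the characteristic row of the complete path determined by `c` -/
noncomputable def rowOf (k : ℕ) (c : ℕ → Bool) : ℕ → ℕ := fun i =>
  if 1 ≤ i ∧ i ≤ mnum k ∧ ∃ j < k, pathNode c j = i then 1 else 0

lemma pathNode_mem_Icc {k : ℕ} (c : ℕ → Bool) {j : ℕ} (hj : j < k) :
    1 ≤ pathNode c j ∧ pathNode c j ≤ mnum k := by
  have hb := pathNode_bounds c j
  have := mnum_mono (show j + 1 ≤ k by omega)
  omega

lemma rowOf_eq_one {k : ℕ} (c : ℕ → Bool) {j : ℕ} (hj : j < k) :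
    rowOf k c (pathNode c j) = 1 := by
  have h := pathNode_mem_Icc c hj
  have hP : 1 ≤ pathNode c j ∧ pathNode c j ≤ mnum k ∧ ∃ j' < k, pathNode c j' = pathNode c j :=
    ⟨h.1, h.2, j, hj, rfl⟩
  simp only [rowOf]
  exact if_pos hP

lemma rowOf_mem_rows {k : ℕ} (c : ℕ → Bool) : rowOf k c ∈ (Tstar k).rows := by
  rw [Tstar]
  refine Finset.mem_filter.mpr ⟨?_, c, fun i hi => ?_⟩
  · rw [Tk, fullTable]
    simp only [allRows, Finset.mem_image]
    refine ⟨fun i _ => rowOf k c i, ?_, ?_⟩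
    · refine Finset.mem_pi.mpr fun i hi => ?_
      simp only [Finset.mem_range, rowOf]
      split <;> omega
    · funext i
      by_cases hi : i ∈ Finset.Icc 1 (mnum k)
      · simp [hi]
      · simp only [hi, dif_neg, not_false_iff]
        simp only [Finset.mem_Icc] at hi
        simp only [rowOf]
        rw [if_neg]; omega
  · simp only [Finset.mem_Icc] at hi
    constructor
    · intro h
      simp only [rowOf] at h
      by_contra hc
      rw [if_neg (fun h' => hc h'.2.2)] at h
      omega
    · rintro ⟨j, hj, rfl⟩
      exact rowOf_eq_one c hj

end Stmt11Aux
namespace Stmt11Aux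

lemma rowOf_eq_one_iff {k i : ℕ} (c : ℕ → Bool) :
    rowOf k c i = 1 ↔ (1 ≤ i ∧ i ≤ mnum k ∧ ∃ j < k, pathNode c j = i) := by
  simp only [rowOf]; split <;> simp_all

lemma nuk_rowOf {k : ℕ} (hk : 1 ≤ k) (c : ℕ → Bool) :
    nuk k (rowOf k c) = {pathNode c (k-1)} := by
  have hk' : k - 1 + 1 = k := by omega
  have hbK := pathNode_bounds c (k-1)
  rw [hk'] at hbK
  ext i
  simp only [nuk, Finset.mem_filter, Finset.mem_range, Finset.mem_singleton]
  constructor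
  · rintro ⟨hi, hcond⟩
    by_cases h0 : i = 0
    · exfalso
      rw [if_pos h0] at hcond
      have h1 : rowOf k c 1 = 1 := by
        have := rowOf_eq_one (k := k) c (j := 0) (by omega)
        simpa [pathNode] using this
      omega
    · rw [if_neg h0] at hcond
      by_cases hl : layer i = k
      · rw [if_pos hl] at hcond
        obtain ⟨_, _, j, hj, hji⟩ := (rowOf_eq_one_iff c).mp hcond
        have hlj : layer i = j + 1 := hji ▸ layer_pathNode c j
        have hjk : j = k - 1 := by omega
        rw [← hji, hjk]
      · exfalso
        rw [if_neg hl] at hcond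
        obtain ⟨h1, h2, h3⟩ := hcond
        obtain ⟨_, _, j, hj, hji⟩ := (rowOf_eq_one_iff c).mp h1
        have hlj : layer i = j + 1 := hji ▸ layer_pathNode c j
        have hjk : j + 1 < k := by omega
        have hch : rowOf k c (pathNode c (j+1)) = 1 := rowOf_eq_one c hjk
        have hpn : pathNode c (j+1) = if c j then lchild (pathNode c j) else rchild (pathNode c j) := rfl
        rw [hji] at hpn
        by_cases hc : c j
        · rw [hpn, if_pos hc] at hch; omega
        · rw [hpn, if_neg hc] at hch; omega
  · rintro rfl
    have h0 : ¬ (pathNode c (k-1) = 0) := by omega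
    have hl : layer (pathNode c (k-1)) = k := by
      have := layer_pathNode c (k-1); rwa [hk'] at this
    refine ⟨by omega, ?_⟩
    rw [if_neg h0, if_pos hl]
    exact rowOf_eq_one c (by omega)

/-- nodes of layer `j+1` reachable by paths avoiding `L` up to step `j` -/
noncomputable def Sset (k : ℕ) (L : List ℕ) (j : ℕ) : Finset ℕ :=
  (Finset.Icc 1 (mnum k)).filter fun i =>
    ∃ c : ℕ → Bool, (∀ j' ≤ j, pathNode c j' ∉ L) ∧ pathNode c j = i

lemma Sset_bounds {k : ℕ} {L : List ℕ} {j i : ℕ} (hi : i ∈ Sset k L j) :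
    mnum j < i ∧ i ≤ mnum (j+1) := by
  obtain ⟨c, _, rfl⟩ := (Finset.mem_filter.mp hi).2
  exact pathNode_bounds c j

lemma card_union_shift {A : Finset ℕ} (hA : A.Nonempty) :
    A.card + 1 ≤ (A ∪ A.image (· + 1)).card := by
  have h1 : A.max' hA + 1 ∈ A.image (· + 1) :=
    Finset.mem_image.mpr ⟨A.max' hA, A.max'_mem hA, rfl⟩
  have h2 : A.max' hA + 1 ∉ A := fun h => by have := A.le_max' _ h; omega
  have h3 : insert (A.max' hA + 1) A ⊆ A ∪ A.image (· + 1) := by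
    intro x hx
    rcases Finset.mem_insert.mp hx with rfl | hx
    · exact Finset.mem_union_right _ h1
    · exact Finset.mem_union_left _ hx
  calc A.card + 1 = (insert (A.max' hA + 1) A).card := (Finset.card_insert_of_notMem h2).symm
    _ ≤ _ := Finset.card_le_card h3

lemma mem_S_succ {k : ℕ} {L : List ℕ} {j : ℕ} (hj : j + 2 ≤ k) {i : ℕ} (hi : i ∈ Sset k L j)
    (b : Bool) (hx : (if b then lchild i else rchild i) ∉ L) :
    (if b then lchild i else rchild i) ∈ Sset k L (j+1) := by
  obtain ⟨hIcc, c, hgood, hpi⟩ := Finset.mem_filter.mp hi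
  have hb := pathNode_bounds c j
  have hlay : layer i = j + 1 := by rw [← hpi]; exact layer_pathNode c j
  set x := if b then lchild i else rchild i with hxdef
  set c' : ℕ → Bool := Function.update c j b with hc'
  have hcongr : ∀ j' ≤ j, pathNode c' j' = pathNode c j' := by
    intro j' hj'
    exact pathNode_congr fun j'' hj'' => by
      rw [hc', Function.update_of_ne (by omega)]
  have hstep : pathNode c' (j+1) = x := by
    have : pathNode c' (j+1) = if c' j then lchild (pathNode c' j) else rchild (pathNode c' j) := rfl
    rw [this, hcongr j le_rfl, hpi, hc', Function.update_self]
  have hxb : mnum (j+1) < x ∧ x ≤ mnum (j+1+1) := by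
    have := pathNode_bounds c' (j+1)
    rwa [hstep] at this
  refine Finset.mem_filter.mpr ⟨?_, c', ?_, hstep⟩
  · have := mnum_mono (show j + 1 + 1 ≤ k from hj)
    exact Finset.mem_Icc.mpr ⟨by omega, by omega⟩
  · intro j' hj'
    rcases Nat.lt_or_ge j' (j+1) with h | h
    · rw [hcongr j' (by omega)]; exact hgood j' (by omega)
    · have : j' = j + 1 := by omega
      rw [this, hstep]; exact hx

lemma Sset_step {k : ℕ} {L : List ℕ} {j : ℕ} (hj : j + 2 ≤ k) (hne : (Sset k L j).Nonempty) :
    (Sset k L j).card + 1 ≤ (Sset k L (j+1)).card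
      + (L.toFinset.filter fun i => layer i = j + 2).card := by
  set A := (Sset k L j).image (· + (j+1)) with hA
  have hAcard : A.card = (Sset k L j).card :=
    Finset.card_image_of_injective _ (add_left_injective _)
  have hAne : A.Nonempty := hne.image _
  have hsub : A ∪ A.image (· + 1) ⊆
      (Sset k L (j+1)) ∪ (L.toFinset.filter fun i => layer i = j + 2) := by
    intro x hx
    have hform : ∃ i ∈ Sset k L j, ∃ b : Bool, x = (if b then lchild i else rchild i) := by
      rcases Finset.mem_union.mp hx with hx | hx
      · obtain ⟨i, hi, rfl⟩ := Finset.mem_image.mp hx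
        refine ⟨i, hi, true, ?_⟩
        have hlay : layer i = j + 1 := by
          obtain ⟨_, c, _, rfl⟩ := Finset.mem_filter.mp hi
          exact layer_pathNode c j
        simp [lchild, hlay]
      · obtain ⟨y, hy, rfl⟩ := Finset.mem_image.mp hx
        obtain ⟨i, hi, rfl⟩ := Finset.mem_image.mp hy
        refine ⟨i, hi, false, ?_⟩
        have hlay : layer i = j + 1 := by
          obtain ⟨_, c, _, rfl⟩ := Finset.mem_filter.mp hi
          exact layer_pathNode c j
        simp [rchild, hlay]
    obtain ⟨i, hi, b, rfl⟩ := hform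
    by_cases hxL : (if b then lchild i else rchild i) ∈ L
    · refine Finset.mem_union_right _ (Finset.mem_filter.mpr ⟨List.mem_toFinset.mpr hxL, ?_⟩)
      have hib := Sset_bounds hi
      have hlay : layer i = j + 1 := layer_eq hib.1 hib.2
      have hm0 := mnum_succ j
      have hm1 := mnum_succ (j+1)
      have hval : (if b then lchild i else rchild i) = i + (j+1) ∨
          (if b then lchild i else rchild i) = i + (j+1) + 1 := by
        cases b
        · right; simp [rchild, hlay]
        · left; simp [lchild, hlay]
      apply layer_eq <;> rcases hval with h | h <;> rw [h] <;> omega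
    · exact Finset.mem_union_left _ (mem_S_succ hj hi b hxL)
  calc (Sset k L j).card + 1 = A.card + 1 := by rw [hAcard]
    _ ≤ (A ∪ A.image (· + 1)).card := card_union_shift hAne
    _ ≤ ((Sset k L (j+1)) ∪ (L.toFinset.filter fun i => layer i = j + 2)).card :=
        Finset.card_le_card hsub
    _ ≤ _ := Finset.card_union_le _ _

lemma S_card {k : ℕ} {L : List ℕ} (c₀ : ℕ → Bool) (hgood : ∀ j < k, pathNode c₀ j ∉ L) :
    ∀ j, j + 1 ≤ k →
      j + 1 ≤ (Sset k L j).card + (L.toFinset.filter fun i => layer i ≤ j + 1).card := by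
  intro j
  induction j with
  | zero =>
    intro hjk
    have h1 : pathNode c₀ 0 ∈ Sset k L 0 := by
      refine Finset.mem_filter.mpr ⟨?_, c₀, fun j' hj' => ?_, rfl⟩
      · have hb := pathNode_bounds c₀ 0
        have := mnum_mono hjk
        exact Finset.mem_Icc.mpr ⟨by omega, by omega⟩
      · have : j' = 0 := by omega
        rw [this]; exact hgood 0 (by omega)
    have := Finset.card_pos.mpr ⟨_, h1⟩
    omega
  | succ j ih =>
    intro hjk
    have hSne : (Sset k L j).Nonempty := by
      refine ⟨pathNode c₀ j, Finset.mem_filter.mpr ⟨?_, c₀, fun j' hj' => hgood j' (by omega), rfl⟩⟩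
      have hb := pathNode_bounds c₀ j
      have := mnum_mono (show j + 1 ≤ k by omega)
      exact Finset.mem_Icc.mpr ⟨by omega, by omega⟩
    have hstep := Sset_step (L := L) (show j + 2 ≤ k by omega) hSne
    have hsplit : (L.toFinset.filter fun i => layer i ≤ j + 1 + 1).card
        = (L.toFinset.filter fun i => layer i ≤ j + 1).card
          + (L.toFinset.filter fun i => layer i = j + 2).card := by
      rw [← Finset.card_union_of_disjoint, ← Finset.filter_or]
      · congr 1
        apply Finset.filter_congr
        intro a _
        constructor
        · intro h; omega
        · intro h; omega
      · rw [Finset.disjoint_left]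
        intro a ha hb
        have h1 := (Finset.mem_filter.mp ha).2
        have h2 := (Finset.mem_filter.mp hb).2
        omega
    have := ih (by omega)
    omega

end Stmt11Aux
/-- **Lemma (7M5).** Let `k ≥ 1`, `f_{i₁},…,f_{i_n} ∈ {f_1,…,f_{m(k)}}` and
`T = T_k^*(f_{i₁},0)⋯(f_{i_n},0)`. If `T ≠ Λ`, then `r(T) ≥ max(1, k − n)`. -/
theorem stmt11 (k : ℕ) (hk : 1 ≤ k) (L : List ℕ)
    (hL : ∀ i ∈ L, i ∈ Finset.Icc 1 (mnum k))
    (hne : ((Tstar k).applyWord (L.map fun i => (i, 0))).rows ≠ ∅) :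
    max 1 (k - L.length) ≤ rnum k ((Tstar k).applyWord (L.map fun i => (i, 0))) := by
  classical
  open Stmt11Aux in
  set W := L.map fun i => (i, 0) with hW
  set T := (Tstar k).applyWord W with hT
  have hk' : k - 1 + 1 = k := by omega
  -- extract a surviving path
  obtain ⟨r0, hr0⟩ := Finset.nonempty_iff_ne_empty.mpr hne
  have hr0' : r0 ∈ (Tstar k).rows ∧ Table.rowSat r0 W := Finset.mem_filter.mp hr0
  have hsat := hr0'.2
  have hr0s := hr0'.1
  rw [Tstar] at hr0s
  obtain ⟨hr0Tk, c₀, hc₀⟩ := Finset.mem_filter.mp hr0s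
  have hgood : ∀ j < k, pathNode c₀ j ∉ L := by
    intro j hj hmem
    have hIcc := hL _ hmem
    have h1 : r0 (pathNode c₀ j) = 1 := (hc₀ _ hIcc).mpr ⟨j, hj, rfl⟩
    have h0 : r0 (pathNode c₀ j) = 0 := by
      have := hsat (pathNode c₀ j, 0) (List.mem_map.mpr ⟨_, hmem, rfl⟩)
      exact this
    omega
  -- lower bound on reachable terminal nodes
  have hS := Stmt11Aux.S_card c₀ hgood (k-1) (by omega)
  rw [hk'] at hS
  have hBle : (L.toFinset.filter fun i => layer i ≤ k).card ≤ L.length :=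
    le_trans (Finset.card_filter_le _ _) L.toFinset_card_le
  -- each reachable terminal node gives a distinct decision set in T
  have hsub : (Stmt11Aux.Sset k L (k-1)).image (fun t => ({t} : Finset ℕ))
      ⊆ T.rows.image (nuk k) := by
    intro s hs
    obtain ⟨t, ht, rfl⟩ := Finset.mem_image.mp hs
    obtain ⟨hIcc, c, hcgood, hct⟩ := Finset.mem_filter.mp ht
    have hcall : ∀ j < k, pathNode c j ∉ L := fun j hj => hcgood j (by omega)
    refine Finset.mem_image.mpr ⟨Stmt11Aux.rowOf k c, ?_, ?_⟩
    · refine Finset.mem_filter.mpr ⟨Stmt11Aux.rowOf_mem_rows c, ?_⟩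
      intro q hq
      obtain ⟨i, hi, rfl⟩ := List.mem_map.mp hq
      show Stmt11Aux.rowOf k c i = 0
      simp only [Stmt11Aux.rowOf]
      rw [if_neg]
      rintro ⟨-, -, j, hj, rfl⟩
      exact hcall j hj hi
    · rw [Stmt11Aux.nuk_rowOf hk c, hct]
  have hcardS : (Stmt11Aux.Sset k L (k-1)).card ≤ rnum k T := by
    calc (Stmt11Aux.Sset k L (k-1)).card
        = ((Stmt11Aux.Sset k L (k-1)).image (fun t => ({t} : Finset ℕ))).card :=
          (Finset.card_image_of_injective _ Finset.singleton_injective).symm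
      _ ≤ (T.rows.image (nuk k)).card := Finset.card_le_card hsub
      _ = rnum k T := rfl
  have h1 : 1 ≤ rnum k T := by
    have : (T.rows.image (nuk k)).Nonempty := ⟨_, Finset.mem_image_of_mem _ hr0⟩
    exact Finset.card_pos.mpr this
  exact max_le h1 (by omega)
end
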